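/- arXiv:2107.11998 — 9 statements merged into one kernel-verified Lean document; each statement's English description precedes it below -/
import Mathlib

section
/- The pmf P(K=k) = (1-θ)(1-θ/2)···(1-θ/(k-1))·(θ/k), k ≥ 1, 0 < θ ≤ 1, sums to 1, i.e., it defines a valid probability distribution on the positive integers. -/
/-- The pmf `P(K = k) = (1-θ)(1-θ/2)⋯(1-θ/(k-1))·(θ/k)`, `k ≥ 1`, `0 < θ ≤ 1`, sums to 1
(here `k` is re-indexed as `k+1`, `k : ℕ`). -/
theorem bgw_pmf_sums_to_one (θ : ℝ) (hθ0 : 0 < θ) (hθ1 : θ ≤ 1) :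
    ∑' k : ℕ, (∏ i ∈ Finset.range k, (1 - θ / (i + 1))) * (θ / (k + 1)) = 1 := by
  set a : ℕ → ℝ := fun n => ∏ i ∈ Finset.range n, (1 - θ / (i + 1)) with ha
  have hfac : ∀ i : ℕ, 0 ≤ 1 - θ / (i + 1) := by
    intro i
    have h1 : θ / (i + 1 : ℝ) ≤ 1 := by
      rw [div_le_one (by positivity)]
      linarith [Nat.cast_nonneg (α := ℝ) i]
    linarith
  have hanonneg : ∀ n, 0 ≤ a n := fun n => Finset.prod_nonneg fun i _ => hfac i
  have hf_nonneg : ∀ k : ℕ, 0 ≤ a k * (θ / (k + 1)) := by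
    intro k
    have h1 : (0:ℝ) ≤ θ / (k + 1) := by positivity
    exact mul_nonneg (hanonneg k) h1
  -- partial sums telescope
  have hpartial : ∀ n, ∑ k ∈ Finset.range n, a k * (θ / (k + 1)) = 1 - a n := by
    intro n
    induction n with
    | zero => simp [ha]
    | succ n ih =>
      rw [Finset.sum_range_succ, ih]
      simp only [ha, Finset.prod_range_succ]
      ring
  -- a n → 0
  have hbound : ∀ n, a n ≤ Real.exp (-(θ * ∑ i ∈ Finset.range n, 1 / (i + 1 : ℝ))) := by
    intro n
    rw [ha]
    have : Real.exp (-(θ * ∑ i ∈ Finset.range n, 1 / (i + 1 : ℝ)))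
        = ∏ i ∈ Finset.range n, Real.exp (-(θ / (i + 1))) := by
      rw [← Real.exp_sum]
      congr 1
      rw [Finset.mul_sum, ← Finset.sum_neg_distrib]
      exact Finset.sum_congr rfl fun i _ => by ring
    rw [this]
    refine Finset.prod_le_prod (fun i _ => hfac i) (fun i _ => ?_)
    have := Real.add_one_le_exp (-(θ / (i + 1 : ℝ)))
    linarith
  have htend : Filter.Tendsto a Filter.atTop (nhds 0) := by
    have hH : Filter.Tendsto (fun n => ∑ i ∈ Finset.range n, 1 / (i + 1 : ℝ))
        Filter.atTop Filter.atTop := by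
      simpa using Real.tendsto_sum_range_one_div_nat_succ_atTop
    have h2 : Filter.Tendsto (fun n => Real.exp (-(θ * ∑ i ∈ Finset.range n, 1 / (i + 1 : ℝ))))
        Filter.atTop (nhds 0) := by
      apply Real.tendsto_exp_atBot.comp
      apply Filter.tendsto_neg_atTop_atBot.comp
      exact Filter.Tendsto.const_mul_atTop hθ0 hH
    exact squeeze_zero hanonneg hbound h2
  -- conclude
  have hsum : Filter.Tendsto (fun n => ∑ k ∈ Finset.range n, a k * (θ / (k + 1)))
      Filter.atTop (nhds 1) := by
    simp only [hpartial]
    have := Filter.Tendsto.const_sub (1:ℝ) htend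
    simpa using this
  have : HasSum (fun k : ℕ => a k * (θ / (k + 1))) 1 :=
    (hasSum_iff_tendsto_nat_of_nonneg hf_nonneg 1).2 hsum
  exact this.tsum_eq
end

section
/- The joint density of the BGW(a,b₁,b₂,θ) distribution is f(x,y) = θ a² b₁ b₂ x^{a-1} y^{a-1} e^{-Z}(1-e^{-Z})^{θ-2}(1-θe^{-Z}), where Z = b₁x^a + b₂y^a, obtained as the mixed second partial derivative ∂²F/∂x∂y of F(x,y) = {1-e^{-b₁x^a}}^θ + {1-e^{-b₂y^a}}^θ - {1-e^{-Z}}^θ. -/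
open Real

/-- The BGW joint cdf. -/
noncomputable def bgwCDF (a b₁ b₂ θ : ℝ) (x y : ℝ) : ℝ :=
  (1 - exp (-(b₁ * x ^ a))) ^ θ + (1 - exp (-(b₂ * y ^ a))) ^ θ
    - (1 - exp (-(b₁ * x ^ a + b₂ * y ^ a))) ^ θ

lemma bgw_aux (a θ b c t : ℝ) (ht : 0 < t) (hpos : 0 < b * t ^ a + c) :
    HasDerivAt (fun s : ℝ => (1 - Real.exp (-(b * s ^ a + c))) ^ θ)
      (θ * (1 - Real.exp (-(b * t ^ a + c))) ^ (θ - 1)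
        * (Real.exp (-(b * t ^ a + c)) * (b * (a * t ^ (a - 1))))) t := by
  have hr : HasDerivAt (fun s : ℝ => s ^ a) (a * t ^ (a - 1)) t :=
    Real.hasDerivAt_rpow_const (Or.inl ht.ne')
  have h2 : HasDerivAt (fun s : ℝ => b * s ^ a + c) (b * (a * t ^ (a - 1))) t :=
    (hr.const_mul b).add_const c
  have h4 : HasDerivAt (fun s : ℝ => Real.exp (-(b * s ^ a + c)))
      (Real.exp (-(b * t ^ a + c)) * -(b * (a * t ^ (a - 1)))) t := h2.neg.exp
  have h5 := h4.const_sub 1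
  have hne : (1 : ℝ) - Real.exp (-(b * t ^ a + c)) ≠ 0 := by
    have : Real.exp (-(b * t ^ a + c)) < 1 := Real.exp_lt_one_iff.mpr (by linarith)
    linarith
  have h6 := h5.rpow_const (p := θ) (Or.inl hne)
  convert h6 using 1
  ring

/-- The joint density of the BGW distribution is the mixed second partial
derivative `∂²F/∂x∂y` of its cdf:
`f(x,y) = θ a² b₁ b₂ x^{a-1} y^{a-1} e^{-Z} (1-e^{-Z})^{θ-2} (1-θe^{-Z})`,
`Z = b₁x^a + b₂y^a`. -/
theorem bgw_density (a b₁ b₂ θ : ℝ) (ha : 0 < a) (hb₁ : 0 < b₁) (hb₂ : 0 < b₂)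
    (hθ0 : 0 < θ) (hθ1 : θ ≤ 1) (x y : ℝ) (hx : 0 < x) (hy : 0 < y) :
    deriv (fun y' : ℝ => deriv (fun x' : ℝ => bgwCDF a b₁ b₂ θ x' y') x) y
      = θ * a ^ 2 * b₁ * b₂ * x ^ (a - 1) * y ^ (a - 1)
          * exp (-(b₁ * x ^ a + b₂ * y ^ a))
          * (1 - exp (-(b₁ * x ^ a + b₂ * y ^ a))) ^ (θ - 2)
          * (1 - θ * exp (-(b₁ * x ^ a + b₂ * y ^ a))) := by
  have hxa : 0 < x ^ a := Real.rpow_pos_of_pos hx a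
  set K : ℝ := b₁ * (a * x ^ (a - 1)) with hK
  set g : ℝ → ℝ := fun y' =>
    θ * (1 - exp (-(b₁ * x ^ a))) ^ (θ - 1) * (exp (-(b₁ * x ^ a)) * K)
      - θ * (1 - exp (-(b₁ * x ^ a + b₂ * y' ^ a))) ^ (θ - 1)
          * (exp (-(b₁ * x ^ a + b₂ * y' ^ a)) * K) with hg
  -- Step 1: the inner derivative equals g y' for all y' > 0
  have hinner : ∀ y' : ℝ, 0 < y' →
      deriv (fun x' : ℝ => bgwCDF a b₁ b₂ θ x' y') x = g y' := by
    intro y' hy'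
    have hya : 0 < y' ^ a := Real.rpow_pos_of_pos hy' a
    have h1 := bgw_aux a θ b₁ 0 x hx (by simpa using mul_pos hb₁ hxa)
    simp only [add_zero] at h1
    have h2 := bgw_aux a θ b₁ (b₂ * y' ^ a) x hx
      (by positivity)
    have hF : HasDerivAt (fun x' : ℝ => bgwCDF a b₁ b₂ θ x' y') (g y') x := by
      have := (h1.add_const ((1 - exp (-(b₂ * y' ^ a))) ^ θ)).sub h2
      simpa [bgwCDF, hg, hK, Pi.sub_def] using this
    exact hF.deriv
  -- Step 2: replace inner derivative by g near y
  have hEq : (fun y' : ℝ => deriv (fun x' : ℝ => bgwCDF a b₁ b₂ θ x' y') x)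
      =ᶠ[nhds y] g := by
    filter_upwards [isOpen_Ioi.mem_nhds hy] with y' hy' using hinner y' hy'
  rw [hEq.deriv_eq]
  -- Step 3: compute deriv g at y
  have hya : 0 < y ^ a := Real.rpow_pos_of_pos hy a
  set Z : ℝ := b₁ * x ^ a + b₂ * y ^ a with hZ
  have hZpos : 0 < Z := by positivity
  set E : ℝ := exp (-Z) with hE
  have hElt : E < 1 := Real.exp_lt_one_iff.mpr (by linarith)
  have hEpos : 0 < E := Real.exp_pos _
  have hne : (1 : ℝ) - E ≠ 0 := by linarith
  have hr : HasDerivAt (fun s : ℝ => s ^ a) (a * y ^ (a - 1)) y :=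
    Real.hasDerivAt_rpow_const (Or.inl hy.ne')
  have hEd : HasDerivAt (fun s : ℝ => exp (-(b₁ * x ^ a + b₂ * s ^ a)))
      (E * -(b₂ * (a * y ^ (a - 1)))) y :=
    ((hr.const_mul b₂).const_add (b₁ * x ^ a)).neg.exp
  have hP : HasDerivAt (fun s : ℝ => (1 - exp (-(b₁ * x ^ a + b₂ * s ^ a))) ^ (θ - 1))
      ((θ - 1) * (1 - E) ^ (θ - 1 - 1) * -(E * -(b₂ * (a * y ^ (a - 1))))) y := by
    have := (hEd.const_sub 1).rpow_const (p := θ - 1) (Or.inl hne)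
    convert this using 1
    ring
  have hprod := hP.mul (hEd.mul_const K)
  have hg' : HasDerivAt g
      (0 - θ * ((θ - 1) * (1 - E) ^ (θ - 1 - 1) * -(E * -(b₂ * (a * y ^ (a - 1))))
          * (E * K)
        + (1 - E) ^ (θ - 1) * (E * -(b₂ * (a * y ^ (a - 1))) * K))) y := by
    have := ((hprod.const_mul θ).const_sub
      (θ * (1 - exp (-(b₁ * x ^ a))) ^ (θ - 1) * (exp (-(b₁ * x ^ a)) * K)))
    convert this using 1
    · rfl
    · rfl
    · funext s; simp [hg]; ring
    · rw [hE, hZ]; ring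
  rw [hg'.deriv]
  -- Step 4: algebra
  have h1E : (0:ℝ) < 1 - E := by linarith
  have e1 : (1 - E) ^ (θ - 1 - 1) = (1 - E) ^ (θ - 2) := by norm_num [sub_sub]
  have e2 : (1 - E) ^ (θ - 1) = (1 - E) ^ (θ - 2) * (1 - E) := by
    rw [show θ - 1 = (θ - 2) + 1 by ring, Real.rpow_add h1E, Real.rpow_one]
  rw [e1, e2, hK]
  ring
end

section
/- For the BGW distribution, the conditional survival function of Y given X = x is P(Y > y | X = x) = e^{-b₂y^a}(1-e^{-Z(x,y)})^{θ-1} / (1-e^{-b₁x^a})^{θ-1}, where Z(x,y) = b₁x^a + b₂y^a. -/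
open Real

/-- The BGW joint survival function. -/
noncomputable def bgwSurv (a b₁ b₂ θ : ℝ) (x y : ℝ) : ℝ :=
  1 - (1 - exp (-(b₁ * x ^ a + b₂ * y ^ a))) ^ θ

/-- The marginal density of `X` under BGW. -/
noncomputable def bgwMarginalDensity (a b θ : ℝ) (x : ℝ) : ℝ :=
  θ * a * b * x ^ (a - 1) * exp (-(b * x ^ a)) * (1 - exp (-(b * x ^ a))) ^ (θ - 1)

/-- The conditional survival function of `Y` given `X = x`, namely
`-(∂S(x,y)/∂x)/f_X(x)`, equals
`e^{-b₂y^a}(1-e^{-Z(x,y)})^{θ-1} / (1-e^{-b₁x^a})^{θ-1}`. -/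
theorem bgw_conditional_survival (a b₁ b₂ θ : ℝ) (ha : 0 < a) (hb₁ : 0 < b₁) (hb₂ : 0 < b₂)
    (hθ0 : 0 < θ) (hθ1 : θ ≤ 1) (x y : ℝ) (hx : 0 < x) (hy : 0 < y) :
    -(deriv (fun x' : ℝ => bgwSurv a b₁ b₂ θ x' y) x) / bgwMarginalDensity a b₁ θ x
      = exp (-(b₂ * y ^ a)) * (1 - exp (-(b₁ * x ^ a + b₂ * y ^ a))) ^ (θ - 1)
          / (1 - exp (-(b₁ * x ^ a))) ^ (θ - 1) := by
  have hxa : (0:ℝ) < x ^ a := rpow_pos_of_pos hx a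
  have hya : (0:ℝ) < y ^ a := rpow_pos_of_pos hy a
  have hZ : (0:ℝ) < b₁ * x ^ a + b₂ * y ^ a := by positivity
  have hbase : (0:ℝ) < 1 - exp (-(b₁ * x ^ a + b₂ * y ^ a)) := by
    have := exp_lt_one_iff.mpr (neg_lt_zero.mpr hZ); linarith
  have hbase1 : (0:ℝ) < 1 - exp (-(b₁ * x ^ a)) := by
    have hpos : (0:ℝ) < b₁ * x ^ a := by positivity
    have := exp_lt_one_iff.mpr (neg_lt_zero.mpr hpos); linarith
  -- derivative computation
  have h1 : HasDerivAt (fun x' : ℝ => x' ^ a) (a * x ^ (a - 1)) x :=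
    Real.hasDerivAt_rpow_const (Or.inl hx.ne')
  have h2 : HasDerivAt (fun x' : ℝ => -(b₁ * x' ^ a + b₂ * y ^ a))
      (-(b₁ * (a * x ^ (a - 1)))) x := ((h1.const_mul b₁).add_const _).neg
  have h3 : HasDerivAt (fun x' : ℝ => 1 - exp (-(b₁ * x' ^ a + b₂ * y ^ a)))
      (exp (-(b₁ * x ^ a + b₂ * y ^ a)) * (b₁ * (a * x ^ (a - 1)))) x := by
    have := (h2.exp).const_sub 1
    exact this.congr_deriv (by ring)
  have h4 : HasDerivAt (fun x' : ℝ => bgwSurv a b₁ b₂ θ x' y)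
      (-(exp (-(b₁ * x ^ a + b₂ * y ^ a)) * (b₁ * (a * x ^ (a - 1))) * θ *
        (1 - exp (-(b₁ * x ^ a + b₂ * y ^ a))) ^ (θ - 1))) x := by
    have h5 := HasDerivAt.rpow_const (p := θ) h3 (Or.inl hbase.ne')
    have := h5.const_sub 1
    unfold bgwSurv
    convert this using 1
  rw [h4.deriv, bgwMarginalDensity]
  have hsplit : exp (-(b₁ * x ^ a + b₂ * y ^ a))
      = exp (-(b₁ * x ^ a)) * exp (-(b₂ * y ^ a)) := by
    rw [← exp_add]; ring_nf
  rw [hsplit]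
  have he1 : exp (-(b₁ * x ^ a)) ≠ 0 := (exp_pos _).ne'
  have hp1 : (1 - exp (-(b₁ * x ^ a))) ^ (θ - 1) ≠ 0 := (rpow_pos_of_pos hbase1 _).ne'
  have hxp : x ^ (a - 1) ≠ 0 := (rpow_pos_of_pos hx _).ne'
  field_simp
end

section
/- For the BGW distribution, the conditional survival function S(y|x) = e^{-b₂y^a}(1-e^{-(b₁x^a+b₂y^a)})^{θ-1}/(1-e^{-b₁x^a})^{θ-1} is nondecreasing in x for each fixed y > 0 when 0 < θ ≤ 1 (positive regression dependence). -/
open Real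

/-- Positive regression dependence of BGW: the conditional survival function
`S(y|x) = e^{-b₂y^a}(1-e^{-(b₁x^a+b₂y^a)})^{θ-1}/(1-e^{-b₁x^a})^{θ-1}`
is nondecreasing in `x` on `(0,∞)` for each fixed `y > 0`, when `0 < θ ≤ 1`. -/
theorem bgw_positive_regression_dependent (a b₁ b₂ θ : ℝ)
    (ha : 0 < a) (hb₁ : 0 < b₁) (hb₂ : 0 < b₂) (hθ0 : 0 < θ) (hθ1 : θ ≤ 1)
    (y : ℝ) (hy : 0 < y) :
    ∀ x₁ x₂ : ℝ, 0 < x₁ → x₁ ≤ x₂ →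
      exp (-(b₂ * y ^ a)) * (1 - exp (-(b₁ * x₁ ^ a + b₂ * y ^ a))) ^ (θ - 1)
          / (1 - exp (-(b₁ * x₁ ^ a))) ^ (θ - 1)
        ≤ exp (-(b₂ * y ^ a)) * (1 - exp (-(b₁ * x₂ ^ a + b₂ * y ^ a))) ^ (θ - 1)
            / (1 - exp (-(b₁ * x₂ ^ a))) ^ (θ - 1) := by
  intro x₁ x₂ hx₁ hle
  have hx₂ : 0 < x₂ := lt_of_lt_of_le hx₁ hle
  set c : ℝ := b₂ * y ^ a with hc
  have hcpos : 0 < c := mul_pos hb₂ (rpow_pos_of_pos hy a)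
  set u₁ : ℝ := b₁ * x₁ ^ a with hu1
  set u₂ : ℝ := b₁ * x₂ ^ a with hu2
  have hu₁pos : 0 < u₁ := mul_pos hb₁ (rpow_pos_of_pos hx₁ a)
  have hu₂pos : 0 < u₂ := mul_pos hb₁ (rpow_pos_of_pos hx₂ a)
  have huu : u₁ ≤ u₂ :=
    mul_le_mul_of_nonneg_left (rpow_le_rpow hx₁.le hle ha.le) hb₁.le
  set t₁ : ℝ := exp (-u₁) with ht1
  set t₂ : ℝ := exp (-u₂) with ht2
  set k : ℝ := exp (-c) with hk
  have ht₁pos : 0 < t₁ := exp_pos _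
  have ht₂pos : 0 < t₂ := exp_pos _
  have hkpos : 0 < k := exp_pos _
  have ht₁lt1 : t₁ < 1 := exp_lt_one_iff.mpr (by linarith)
  have ht₂lt1 : t₂ < 1 := exp_lt_one_iff.mpr (by linarith)
  have hklt1 : k < 1 := exp_lt_one_iff.mpr (by linarith)
  have ht21 : t₂ ≤ t₁ := exp_le_exp.mpr (by linarith)
  have he1 : exp (-(u₁ + c)) = t₁ * k := by rw [ht1, hk, ← exp_add]; ring_nf
  have he2 : exp (-(u₂ + c)) = t₂ * k := by rw [ht2, hk, ← exp_add]; ring_nf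
  rw [he1, he2]
  have hB₁ : 0 < 1 - t₁ := by linarith
  have hB₂ : 0 < 1 - t₂ := by linarith
  have hA₁ : 0 < 1 - t₁ * k := by nlinarith
  have hA₂ : 0 < 1 - t₂ * k := by nlinarith
  have hratio : (1 - t₂ * k) / (1 - t₂) ≤ (1 - t₁ * k) / (1 - t₁) := by
    rw [div_le_div_iff₀ hB₂ hB₁]
    nlinarith
  have hr2pos : 0 < (1 - t₂ * k) / (1 - t₂) := div_pos hA₂ hB₂
  have hmono : ((1 - t₁ * k) / (1 - t₁)) ^ (θ - 1)
      ≤ ((1 - t₂ * k) / (1 - t₂)) ^ (θ - 1) :=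
    rpow_le_rpow_of_nonpos hr2pos hratio (by linarith)
  rw [div_rpow hA₁.le hB₁.le, div_rpow hA₂.le hB₂.le] at hmono
  have hE : 0 < exp (-c) := exp_pos _
  calc exp (-c) * (1 - t₁ * k) ^ (θ - 1) / (1 - t₁) ^ (θ - 1)
      = exp (-c) * ((1 - t₁ * k) ^ (θ - 1) / (1 - t₁) ^ (θ - 1)) := by ring
    _ ≤ exp (-c) * ((1 - t₂ * k) ^ (θ - 1) / (1 - t₂) ^ (θ - 1)) :=
        mul_le_mul_of_nonneg_left hmono hE.le
    _ = exp (-c) * (1 - t₂ * k) ^ (θ - 1) / (1 - t₂) ^ (θ - 1) := by ring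
end

section
/- The BGW distribution is positively quadrant dependent: for all x, y ≥ 0, S(x,y) ≥ S_X(x)·S_Y(y), i.e., 1-(1-e^{-(u+v)})^θ ≥ (1-(1-e^{-u})^θ)(1-(1-e^{-v})^θ) for all u, v ≥ 0 and 0 < θ ≤ 1. -/
open Real

/-- Submodularity of `t ↦ t^θ` for `0 ≤ θ ≤ 1`. -/
lemma rpow_submodular (θ : ℝ) (hθ0 : 0 ≤ θ) (hθ1 : θ ≤ 1) (x h d : ℝ)
    (hx : 0 ≤ x) (hh : 0 ≤ h) (hd : 0 ≤ d) :
    (x + h + d) ^ θ + x ^ θ ≤ (x + h) ^ θ + (x + d) ^ θ := by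
  rcases eq_or_lt_of_le (by positivity : (0:ℝ) ≤ h + d) with hs | hs
  · have hh0 : h = 0 := by linarith
    have hd0 : d = 0 := by linarith
    simp [hh0, hd0]
  · have hcc := Real.concaveOn_rpow hθ0 hθ1
    have hmem1 : x ∈ Set.Ici (0:ℝ) := hx
    have hmem2 : x + h + d ∈ Set.Ici (0:ℝ) := by simp [Set.mem_Ici]; linarith
    have h1 := hcc.2 hmem1 hmem2 (show (0:ℝ) ≤ d / (h + d) by positivity)
      (show (0:ℝ) ≤ h / (h + d) by positivity) (show d / (h + d) + h / (h + d) = 1 by field_simp <;> ring)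
    have h2 := hcc.2 hmem1 hmem2 (show (0:ℝ) ≤ h / (h + d) by positivity)
      (show (0:ℝ) ≤ d / (h + d) by positivity) (show h / (h + d) + d / (h + d) = 1 by field_simp <;> ring)
    have e1 : (d / (h + d)) • x + (h / (h + d)) • (x + h + d) = x + h := by
      simp only [smul_eq_mul]; field_simp [hs.ne']
      ring
    have e2 : (h / (h + d)) • x + (d / (h + d)) • (x + h + d) = x + d := by
      simp only [smul_eq_mul]; field_simp [hs.ne']
      ring
    rw [e1] at h1
    rw [e2] at h2
    have key : (d / (h + d) + h / (h + d)) = 1 := by field_simp <;> ring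
    simp only [smul_eq_mul] at h1 h2
    have hprod : (d / (h + d) + h / (h + d)) * (x ^ θ + (x + h + d) ^ θ)
        = x ^ θ + (x + h + d) ^ θ := by rw [key]; ring
    nlinarith [h1, h2, hprod]

/-- Positive quadrant dependence of the BGW distribution: with `u = b₁x^a`, `v = b₂y^a`,
`1-(1-e^{-(u+v)})^θ ≥ (1-(1-e^{-u})^θ)(1-(1-e^{-v})^θ)` for all `u, v ≥ 0`, `0 < θ ≤ 1`. -/
theorem bgw_pqd (θ : ℝ) (hθ0 : 0 < θ) (hθ1 : θ ≤ 1) (u v : ℝ) (hu : 0 ≤ u) (hv : 0 ≤ v) :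
    (1 - (1 - exp (-u)) ^ θ) * (1 - (1 - exp (-v)) ^ θ)
      ≤ 1 - (1 - exp (-(u + v))) ^ θ := by
  set a : ℝ := 1 - exp (-u) with ha_def
  set b : ℝ := 1 - exp (-v) with hb_def
  have ha0 : 0 ≤ a := by
    have := exp_le_one_iff.mpr (by linarith : -u ≤ 0)
    simp [ha_def]; linarith
  have hb0 : 0 ≤ b := by
    have := exp_le_one_iff.mpr (by linarith : -v ≤ 0)
    simp [hb_def]; linarith
  have ha1 : a ≤ 1 := by
    have := exp_pos (-u); simp [ha_def]; linarith
  have hb1 : b ≤ 1 := by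
    have := exp_pos (-v); simp [hb_def]; linarith
  have hexp : 1 - exp (-(u + v)) = a + b - a * b := by
    have : exp (-(u+v)) = exp (-u) * exp (-v) := by
      rw [← Real.exp_add]; ring_nf
    rw [this, ha_def, hb_def]; ring
  rw [hexp]
  have key := rpow_submodular θ hθ0.le hθ1 (a * b) (a * (1 - b)) (b * (1 - a))
    (by positivity) (by nlinarith) (by nlinarith)
  have e1 : a * b + a * (1 - b) = a := by ring
  have e2 : a * b + a * (1 - b) + b * (1 - a) = a + b - a * b := by ring
  have e3 : a * b + b * (1 - a) = b := by ring
  rw [e2, e1, e3] at key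
  have hmul : (a * b) ^ θ = a ^ θ * b ^ θ := Real.mul_rpow ha0 hb0
  rw [hmul] at key
  nlinarith [key, hmul]
end

section
/- The r-th moment of X ~ EW(a,b,θ) (exponentiated Weibull, cdf (1-e^{-bx^a})^θ) is E[X^r] = (θ Γ(1+r/a)/b^{r/a}) ∑_{j=0}^∞ binom(θ-1,j) (-1)^j/(j+1)^{1+r/a}. -/
open Real

noncomputable def ewC (θ : ℝ) (j : ℕ) : ℝ := ∏ i ∈ Finset.range j, ((1 - θ + i) / (i + 1))

lemma ewC_zero (θ : ℝ) : ewC θ 0 = 1 := by simp [ewC]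

lemma ewC_succ (θ : ℝ) (j : ℕ) : ewC θ (j+1) = ewC θ j * ((1 - θ + j) / (j + 1)) := by
  rw [ewC, ewC, Finset.prod_range_succ]

lemma ewC_nonneg {θ : ℝ} (hθ1 : θ ≤ 1) (j : ℕ) : 0 ≤ ewC θ j := by
  apply Finset.prod_nonneg
  intro i _
  have h : (0:ℝ) ≤ 1 - θ + i := by
    have : (0:ℝ) ≤ (i:ℝ) := Nat.cast_nonneg i
    linarith
  positivity

lemma ewC_le_one {θ : ℝ} (hθ0 : 0 < θ) (hθ1 : θ ≤ 1) (j : ℕ) : ewC θ j ≤ 1 := by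
  apply Finset.prod_le_one
  · intro i _
    have h : (0:ℝ) ≤ 1 - θ + i := by
      have : (0:ℝ) ≤ (i:ℝ) := Nat.cast_nonneg i
      linarith
    positivity
  · intro i _
    rw [div_le_one (by positivity)]
    linarith

lemma ewC_summable {θ : ℝ} (hθ0 : 0 < θ) (hθ1 : θ ≤ 1) {y : ℝ} (hy : |y| < 1) :
    Summable (fun j => ewC θ j * y ^ j) := by
  apply Summable.of_norm
  apply Summable.of_nonneg_of_le (fun j => norm_nonneg _) (fun j => ?_)
    (summable_geometric_of_lt_one (abs_nonneg y) hy)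
  rw [norm_mul, norm_pow]
  calc ‖ewC θ j‖ * ‖y‖ ^ j ≤ 1 * ‖y‖ ^ j := by
        apply mul_le_mul_of_nonneg_right _ (by positivity)
        rw [Real.norm_eq_abs, abs_of_nonneg (ewC_nonneg hθ1 j)]
        exact ewC_le_one hθ0 hθ1 j
    _ = |y| ^ j := by rw [one_mul, Real.norm_eq_abs]

lemma ewC_deriv_summable {θ : ℝ} (hθ0 : 0 < θ) (hθ1 : θ ≤ 1) {y : ℝ} (hy : |y| < 1) :
    Summable (fun j : ℕ => (j : ℝ) * ewC θ j * y ^ j) := by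
  apply Summable.of_norm
  apply Summable.of_nonneg_of_le (fun j => norm_nonneg _) (fun j => ?_)
    (summable_pow_mul_geometric_of_norm_lt_one (R := ℝ) 1 (r := |y|)
      (by rwa [Real.norm_eq_abs, abs_abs]))
  rw [norm_mul, norm_mul, norm_pow]
  have h1 : ‖ewC θ j‖ ≤ 1 := by
    rw [Real.norm_eq_abs, abs_of_nonneg (ewC_nonneg hθ1 j)]
    exact ewC_le_one hθ0 hθ1 j
  calc ‖(j:ℝ)‖ * ‖ewC θ j‖ * ‖y‖ ^ j ≤ ‖(j:ℝ)‖ * 1 * ‖y‖ ^ j := by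
        apply mul_le_mul_of_nonneg_right _ (by positivity)
        exact mul_le_mul_of_nonneg_left h1 (norm_nonneg _)
    _ = (j:ℝ) ^ 1 * |y| ^ j := by
        rw [Real.norm_natCast, pow_one, mul_one, Real.norm_eq_abs]

lemma ewC_hasSum {θ : ℝ} (hθ0 : 0 < θ) (hθ1 : θ ≤ 1) {t : ℝ} (ht0 : 0 ≤ t) (ht1 : t < 1) :
    HasSum (fun j => ewC θ j * t ^ j) ((1 - t) ^ (θ - 1)) := by
  set d : ℝ := (1 + t) / 2 with hd
  have hd0 : 0 < d := by rw [hd]; linarith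
  have hd1 : d < 1 := by rw [hd]; linarith
  have htd : t < d := by rw [hd]; linarith
  set T : Set ℝ := Set.Ioo (-d) d with hT
  have hTo : IsOpen T := isOpen_Ioo
  have hTc : IsPreconnected T := (convex_Ioo _ _).isPreconnected
  have h0T : (0:ℝ) ∈ T := ⟨by linarith, hd0⟩
  have htT : t ∈ T := ⟨by linarith, htd⟩
  have habs : ∀ y ∈ T, |y| < d := fun y hy => abs_lt.mpr ⟨hy.1, hy.2⟩
  set f : ℝ → ℝ := fun y => ∑' j, ewC θ j * y ^ j with hf
  set D : ℝ → ℝ := fun y => ∑' j : ℕ, ewC θ j * ((j:ℝ) * y ^ (j-1)) with hD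
  set u : ℕ → ℝ := fun j => (j:ℝ) * d ^ (j-1) with hu
  have hus : Summable u := by
    rw [← summable_nat_add_iff 1]
    have h1 : Summable (fun n : ℕ => (n:ℝ) ^ 1 * d ^ n) :=
      summable_pow_mul_geometric_of_norm_lt_one 1
        (by rw [Real.norm_eq_abs, abs_of_nonneg hd0.le]; exact hd1)
    have h2 : Summable (fun n : ℕ => d ^ n) :=
      summable_geometric_of_lt_one hd0.le hd1
    apply ((h1.add h2).congr)
    intro n
    simp only [hu, Nat.add_sub_cancel, pow_one, Nat.cast_add, Nat.cast_one]
    ring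
  have hbound : ∀ (n : ℕ), ∀ y ∈ T, ‖ewC θ n * ((n:ℝ) * y ^ (n-1))‖ ≤ u n := by
    intro n y hy
    rw [norm_mul, norm_mul, norm_pow, Real.norm_natCast]
    have h1 : ‖ewC θ n‖ ≤ 1 := by
      rw [Real.norm_eq_abs, abs_of_nonneg (ewC_nonneg hθ1 n)]
      exact ewC_le_one hθ0 hθ1 n
    have h2 : ‖y‖ ^ (n-1) ≤ d ^ (n-1) := by
      apply pow_le_pow_left₀ (norm_nonneg y)
      rw [Real.norm_eq_abs]; exact (habs y hy).le
    calc ‖ewC θ n‖ * ((n:ℝ) * ‖y‖ ^ (n-1)) ≤ 1 * ((n:ℝ) * d ^ (n-1)) := by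
          apply mul_le_mul h1 _ (by positivity) one_pos.le
          exact mul_le_mul_of_nonneg_left h2 (Nat.cast_nonneg n)
      _ = u n := by rw [one_mul]
  have hg0 : Summable (fun n : ℕ => ewC θ n * (0:ℝ) ^ n) := by
    apply summable_of_ne_finset_zero (s := {0})
    intro n hn
    simp only [Finset.mem_singleton] at hn
    rw [zero_pow hn, mul_zero]
  have hderiv : ∀ y ∈ T, HasDerivAt f (D y) y := by
    intro y hy
    exact hasDerivAt_tsum_of_isPreconnected hus hTo hTc
      (fun j z _ => (hasDerivAt_pow j z).const_mul (ewC θ j))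
      (fun j z hz => hbound j z hz) h0T hg0 hy
  have key : ∀ y ∈ T, (1 - y) * D y = (1 - θ) * f y := by
    intro y hy
    have hyabs : |y| < 1 := lt_trans (habs y hy) hd1
    have hS1 : Summable fun j => ewC θ j * y ^ j := ewC_summable hθ0 hθ1 hyabs
    have hS2 : Summable fun j : ℕ => (j:ℝ) * ewC θ j * y ^ j := ewC_deriv_summable hθ0 hθ1 hyabs
    have hDsum : Summable (fun j : ℕ => ewC θ j * ((j:ℝ) * y ^ (j-1))) :=
      Summable.of_norm (hus.of_nonneg_of_le (fun j => norm_nonneg _)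
        (fun j => hbound j y hy))
    have hyD : y * D y = ∑' j : ℕ, (j:ℝ) * ewC θ j * y ^ j := by
      rw [hD, ← tsum_mul_left]
      apply tsum_congr; intro j
      cases j with
      | zero => simp
      | succ n =>
        simp only [Nat.add_sub_cancel, Nat.cast_add, Nat.cast_one]
        ring
    have hD0 : D y = ∑' j : ℕ, (1 - θ + j) * ewC θ j * y ^ j := by
      have : D y = ∑' j : ℕ, ewC θ j * ((j:ℝ) * y ^ (j-1)) := rfl
      rw [this, Summable.tsum_eq_zero_add hDsum]
      have h00 : ewC θ 0 * ((0:ℕ):ℝ) * y ^ ((0:ℕ)-1) = 0 := by simp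
      simp only [Nat.cast_zero, zero_mul, mul_zero, zero_add, Nat.cast_add, Nat.cast_one,
        Nat.add_sub_cancel]
      apply tsum_congr; intro n
      rw [ewC_succ]
      have hn1 : ((n:ℝ) + 1) ≠ 0 := by positivity
      field_simp
    have hsplit : ∑' j : ℕ, (1 - θ + j) * ewC θ j * y ^ j
        = (1 - θ) * f y + y * D y := by
      have hfy : f y = ∑' j : ℕ, ewC θ j * y ^ j := rfl
      rw [hyD, hfy, ← tsum_mul_left]
      rw [← Summable.tsum_add (hS1.mul_left (1-θ)) hS2]
      apply tsum_congr; intro j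
      ring
    have h := hD0.trans hsplit
    linear_combination h
  set φ : ℝ → ℝ := fun y => (1 - y) ^ (1 - θ) * f y with hφ
  have hφd : ∀ y ∈ T, HasDerivAt φ 0 y := by
    intro y hy
    have hy1 : 0 < 1 - y := by have := hy.2; simp only [hT, Set.mem_Ioo] at hy; linarith [hy.2]
    have hbase : HasDerivAt (fun z : ℝ => 1 - z) (-1) y := by
      simpa using (hasDerivAt_id y).const_sub 1
    have h1 : HasDerivAt (fun z : ℝ => (1 - z) ^ (1 - θ))
        ((1 - θ) * (1 - y) ^ (1 - θ - 1) * (-1)) y :=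
      (Real.hasDerivAt_rpow_const (Or.inl hy1.ne')).comp y hbase
    have h2 := hderiv y hy
    have hval : (1 - θ) * (1 - y) ^ (1 - θ - 1) * (-1) * f y + (1 - y) ^ (1 - θ) * D y = 0 := by
      have hkey := key y hy
      have e1 : (1:ℝ) - θ - 1 = -θ := by ring
      have e2 : (1 - y) ^ (1 - θ) = (1 - y) ^ (-θ) * (1 - y) := by
        rw [show (1:ℝ) - θ = -θ + 1 by ring, Real.rpow_add hy1, Real.rpow_one]
      rw [e1, e2]
      linear_combination ((1 - y) ^ (-θ)) * hkey
    have := h1.mul h2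
    rw [hval] at this
    exact this
  have hsub : Set.Icc (0:ℝ) t ⊆ T := by
    intro x hx
    exact ⟨by linarith [hx.1], by linarith [hx.2]⟩
  have hconst := constant_of_has_deriv_right_zero
    (f := φ) (a := 0) (b := t)
    (fun x hx => ((hφd x (hsub hx)).continuousAt.continuousWithinAt))
    (fun x hx => (hφd x (hsub ⟨hx.1, hx.2.le⟩)).hasDerivWithinAt)
  have hφt : φ t = φ 0 := hconst t ⟨ht0, le_refl t⟩
  have hf0 : f 0 = 1 := by
    have h : f 0 = ∑' j : ℕ, ewC θ j * (0:ℝ) ^ j := rfl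
    rw [h, tsum_eq_single 0 (fun n hn => by rw [zero_pow hn, mul_zero])]
    simp [ewC_zero]
  have hφ0 : φ 0 = 1 := by
    show (1 - (0:ℝ)) ^ (1 - θ) * f 0 = 1
    rw [hf0]; simp
  have h1t : 0 < 1 - t := by linarith
  have hft : f t = (1 - t) ^ (θ - 1) := by
    have heq : (1 - t) ^ (1 - θ) * f t = 1 := by
      have h : φ t = (1 - t) ^ (1 - θ) * f t := rfl
      rw [← h, hφt, hφ0]
    rw [show θ - 1 = -(1 - θ) by ring, Real.rpow_neg h1t.le]
    exact eq_inv_of_mul_eq_one_left (by linarith [heq] : f t * (1 - t) ^ (1 - θ) = 1)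
  have := (ewC_summable hθ0 hθ1 (by rwa [abs_of_nonneg ht0])).hasSum
  rwa [← hft]

open MeasureTheory in
lemma ew_integrableOn_aux {p q B : ℝ} (hp : 0 < p) (hq : -1 < q) (hB : 0 < B) :
    IntegrableOn (fun x : ℝ => x ^ q * Real.exp (-(B * x ^ p))) (Set.Ioi 0) := by
  set s : ℝ := (q + 1) / p with hs
  have hs0 : 0 < s := div_pos (by linarith) hp
  have hg : IntegrableOn (fun x : ℝ => Real.exp (-x) * x ^ (s - 1)) (Set.Ioi 0) :=
    Real.GammaIntegral_convergent hs0
  have hgB : IntegrableOn (fun y : ℝ => Real.exp (-(B * y)) * (B * y) ^ (s - 1)) (Set.Ioi 0) := by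
    have h := (integrableOn_Ioi_comp_mul_left_iff
      (fun x : ℝ => Real.exp (-x) * x ^ (s - 1)) 0 hB).mpr (by rwa [mul_zero])
    exact h
  have hf : IntegrableOn (fun y : ℝ => y ^ (s - 1) * Real.exp (-(B * y))) (Set.Ioi 0) := by
    apply IntegrableOn.congr_fun (hgB.const_mul (B ^ ((1:ℝ) - s))) _ measurableSet_Ioi
    intro x hx
    have hx0 : (0:ℝ) < x := hx
    show B ^ ((1:ℝ)-s) * (Real.exp (-(B*x)) * (B*x) ^ (s-1)) = x ^ (s-1) * Real.exp (-(B*x))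
    rw [Real.mul_rpow hB.le hx0.le]
    rw [show B ^ ((1:ℝ)-s) * (Real.exp (-(B*x)) * (B ^ (s-1) * x ^ (s-1)))
        = (B ^ ((1:ℝ)-s) * B ^ (s-1)) * (x ^ (s-1) * Real.exp (-(B*x))) by ring]
    rw [← Real.rpow_add hB]
    norm_num
  have h2 := (integrableOn_Ioi_comp_rpow_iff'
    (fun y : ℝ => y ^ (s - 1) * Real.exp (-(B * y))) (p := p) hp.ne').mpr hf
  apply IntegrableOn.congr_fun h2 _ measurableSet_Ioi
  intro x hx
  have hx0 : (0:ℝ) < x := hx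
  show x ^ (p-1) • ((x ^ p) ^ (s - 1) * Real.exp (-(B * x ^ p))) = x ^ q * Real.exp (-(B * x ^ p))
  have hxp : (x ^ p) ^ (s - 1) = x ^ (p * (s - 1)) := by
    rw [← Real.rpow_mul hx0.le]
  rw [smul_eq_mul, hxp, show x ^ (p-1) * (x ^ (p * (s-1)) * Real.exp (-(B * x ^ p)))
      = (x ^ (p-1) * x ^ (p * (s-1))) * Real.exp (-(B * x ^ p)) by ring,
    ← Real.rpow_add hx0]
  congr 2
  have hps : p * s = q + 1 := by rw [hs]; field_simp
  nlinarith [hps]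

lemma ewC_cast (θ : ℝ) (j : ℕ) :
    ewC θ j = (∏ i ∈ Finset.range j, (θ - 1 - i)) / (Nat.factorial j) * (-1:ℝ) ^ j := by
  rw [ewC, Finset.prod_div_distrib]
  have h1 : ∏ i ∈ Finset.range j, ((i:ℝ) + 1) = (Nat.factorial j : ℝ) := by
    rw [← Finset.prod_range_add_one_eq_factorial]
    push_cast
    rfl
  have h2 : ∏ i ∈ Finset.range j, (1 - θ + (i:ℝ))
      = (-1:ℝ) ^ j * ∏ i ∈ Finset.range j, (θ - 1 - i) := by
    calc ∏ i ∈ Finset.range j, (1 - θ + (i:ℝ))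
        = ∏ i ∈ Finset.range j, ((-1) * (θ - 1 - (i:ℝ))) :=
          Finset.prod_congr rfl (fun i _ => by ring)
      _ = (∏ _i ∈ Finset.range j, (-1:ℝ)) * ∏ i ∈ Finset.range j, (θ - 1 - (i:ℝ)) :=
          Finset.prod_mul_distrib
      _ = (-1:ℝ) ^ j * ∏ i ∈ Finset.range j, (θ - 1 - (i:ℝ)) := by
          rw [Finset.prod_const]; rw [Finset.card_range]
  rw [h1, h2]
  ring

open MeasureTheory in
lemma ew_integral_aux {p q B : ℝ} (hp : 0 < p) (hq : -1 < q) (hB : 0 < B) :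
    ∫ x in Set.Ioi (0:ℝ), x ^ q * Real.exp (-(B * x ^ p))
      = B ^ (-(q + 1) / p) * (1 / p) * Real.Gamma ((q + 1) / p) := by
  rw [← integral_rpow_mul_exp_neg_mul_rpow hp hq hB]
  simp only [neg_mul]

open MeasureTheory

/-- The `r`-th moment of `X ~ EW(a,b,θ)` (density `θab x^{a-1}e^{-bx^a}(1-e^{-bx^a})^{θ-1}`):
`E[X^r] = (θΓ(1+r/a)/b^{r/a}) ∑_{j≥0} binom(θ-1,j)(-1)^j/(j+1)^{1+r/a}`. -/
theorem ew_moment (a b θ : ℝ) (ha : 0 < a) (hb : 0 < b) (hθ0 : 0 < θ) (hθ1 : θ ≤ 1)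
    (r : ℝ) (hr : 0 < r) :
    ∫ x in Set.Ioi (0:ℝ),
        x ^ r * (θ * a * b * x ^ (a - 1) * exp (-(b * x ^ a))
          * (1 - exp (-(b * x ^ a))) ^ (θ - 1))
      = θ * Real.Gamma (1 + r / a) / b ^ (r / a)
          * ∑' j : ℕ, (∏ i ∈ Finset.range j, (θ - 1 - i)) / (Nat.factorial j)
              * (-1:ℝ) ^ j / ((j : ℝ) + 1) ^ (1 + r / a) := by
  have ha' : a ≠ 0 := ha.ne'
  set s : ℝ := r / a with hs
  have hs0 : 0 < s := div_pos hr ha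
  have hq : (-1:ℝ) < r + a - 1 := by linarith
  set G : ℕ → ℝ → ℝ := fun j x =>
    θ * ewC θ j * (a * b) * (x ^ (r + a - 1) * exp (-(((j:ℝ) + 1) * b * x ^ a))) with hG
  have hBj : ∀ j : ℕ, 0 < ((j:ℝ) + 1) * b := fun j => by positivity
  have hGint : ∀ j : ℕ, IntegrableOn (G j) (Set.Ioi 0) := fun j =>
    (ew_integrableOn_aux ha hq (hBj j)).const_mul _
  have hΓ : 0 < Real.Gamma (1 + s) := Real.Gamma_pos_of_pos (by linarith)
  set C : ℝ := θ * Real.Gamma (1 + s) / b ^ s with hC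
  have hC0 : 0 ≤ C := by positivity
  -- value of each integral
  have hGval : ∀ j : ℕ, (∫ x in Set.Ioi (0:ℝ), G j x)
      = C * (ewC θ j * ((j:ℝ) + 1) ^ (-(1 + s))) := by
    intro j
    have h1 : (∫ x in Set.Ioi (0:ℝ), G j x)
        = θ * ewC θ j * (a * b) * ∫ x in Set.Ioi (0:ℝ),
            x ^ (r + a - 1) * exp (-((((j:ℝ) + 1) * b) * x ^ a)) := by
      rw [← integral_const_mul]
    rw [h1, ew_integral_aux ha hq (hBj j)]
    have e2 : (r + a - 1 + 1) / a = 1 + s := by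
      rw [hs, show r + a - 1 + 1 = r + a by ring, add_div, div_self ha', add_comm]
    have e1 : -(r + a - 1 + 1) / a = -(1 + s) := by rw [neg_div, e2]
    rw [e1, e2, Real.mul_rpow (by positivity) hb.le]
    have hbb : b * b ^ (-(1 + s)) = (b ^ s)⁻¹ := by
      nth_rewrite 1 [← Real.rpow_one b]
      rw [← Real.rpow_add hb, show (1:ℝ) + -(1 + s) = -s by ring, Real.rpow_neg hb.le]
    have haa : a * (1/a) = 1 := by field_simp
    calc θ * ewC θ j * (a * b)
          * (((j:ℝ) + 1) ^ (-(1 + s)) * b ^ (-(1 + s)) * (1/a) * Real.Gamma (1 + s))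
        = (a * (1/a)) * (b * b ^ (-(1 + s)))
            * (θ * ewC θ j * ((j:ℝ) + 1) ^ (-(1 + s)) * Real.Gamma (1 + s)) := by ring
      _ = C * (ewC θ j * ((j:ℝ) + 1) ^ (-(1 + s))) := by rw [haa, hbb, hC]; ring
  -- pointwise expansion
  have hpt : ∀ x ∈ Set.Ioi (0:ℝ),
      x ^ r * (θ * a * b * x ^ (a - 1) * exp (-(b * x ^ a))
        * (1 - exp (-(b * x ^ a))) ^ (θ - 1)) = ∑' j, G j x := by
    intro x hx
    have hx0 : (0:ℝ) < x := hx
    have hxa : 0 < b * x ^ a := mul_pos hb (Real.rpow_pos_of_pos hx0 a)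
    have ht1 : exp (-(b * x ^ a)) < 1 := exp_lt_one_iff.mpr (by linarith)
    have hsum := (ewC_hasSum hθ0 hθ1 (exp_nonneg _) ht1).mul_left
      (x ^ r * (θ * a * b * x ^ (a - 1) * exp (-(b * x ^ a))))
    have heq : (fun j : ℕ => x ^ r * (θ * a * b * x ^ (a - 1) * exp (-(b * x ^ a)))
        * (ewC θ j * exp (-(b * x ^ a)) ^ j)) = fun j => G j x := by
      funext j
      have e1 : exp (-(b * x ^ a)) * exp ((j:ℝ) * -(b * x ^ a))
          = exp (-(((j:ℝ) + 1) * b * x ^ a)) := by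
        rw [← Real.exp_add]; congr 1; ring
      have e2 : x ^ r * x ^ (a - 1) = x ^ (r + a - 1) := by
        rw [← Real.rpow_add hx0]; congr 1; ring
      show _ = θ * ewC θ j * (a * b) * (x ^ (r + a - 1) * exp (-(((j:ℝ) + 1) * b * x ^ a)))
      rw [← Real.exp_nat_mul, ← e2, ← e1]
      ring
    rw [heq] at hsum
    have hfin : x ^ r * (θ * a * b * x ^ (a - 1) * exp (-(b * x ^ a))
          * (1 - exp (-(b * x ^ a))) ^ (θ - 1))
        = x ^ r * (θ * a * b * x ^ (a - 1) * exp (-(b * x ^ a)))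
          * (1 - exp (-(b * x ^ a))) ^ (θ - 1) := by ring
    rw [hfin, ← hsum.tsum_eq]
  -- summability of the series of integral values
  have hsum0 : Summable (fun j : ℕ => ((j:ℝ) + 1) ^ (-(1 + s))) := by
    have h := Real.summable_nat_rpow (p := -(1 + s)) |>.mpr (by linarith)
    have h2 := (summable_nat_add_iff 1).mpr h
    exact h2.congr (fun n => by push_cast; ring_nf)
  have hsum1 : Summable (fun j : ℕ => ewC θ j * ((j:ℝ) + 1) ^ (-(1 + s))) := by
    apply Summable.of_nonneg_of_le
      (fun j => mul_nonneg (ewC_nonneg hθ1 j) (Real.rpow_nonneg (by positivity) _))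
      (fun j => ?_) hsum0
    calc ewC θ j * ((j:ℝ) + 1) ^ (-(1 + s)) ≤ 1 * ((j:ℝ) + 1) ^ (-(1 + s)) :=
          mul_le_mul_of_nonneg_right (ewC_le_one hθ0 hθ1 j) (Real.rpow_nonneg (by positivity) _)
      _ = ((j:ℝ) + 1) ^ (-(1 + s)) := one_mul _
  have hnn : ∀ (j : ℕ), ∀ x ∈ Set.Ioi (0:ℝ), 0 ≤ G j x := by
    intro j x hx
    have hx0 : (0:ℝ) < x := hx
    apply mul_nonneg (mul_nonneg (mul_nonneg hθ0.le (ewC_nonneg hθ1 j)) (by positivity))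
    exact mul_nonneg (Real.rpow_nonneg hx0.le _) (exp_nonneg _)
  have hlint : ∑' j : ℕ, ∫⁻ x, ‖G j x‖ₑ ∂(volume.restrict (Set.Ioi 0)) ≠ ⊤ := by
    have h1 : ∀ j : ℕ, ∫⁻ x, ‖G j x‖ₑ ∂(volume.restrict (Set.Ioi 0))
        = ENNReal.ofReal (C * (ewC θ j * ((j:ℝ) + 1) ^ (-(1 + s)))) := by
      intro j
      rw [← ofReal_integral_norm_eq_lintegral_enorm (hGint j)]
      congr 1
      rw [← hGval j]
      apply setIntegral_congr_fun measurableSet_Ioi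
      intro x hx
      exact norm_of_nonneg (hnn j x hx)
    simp only [h1]
    rw [← ENNReal.ofReal_tsum_of_nonneg
      (fun j => mul_nonneg hC0 (mul_nonneg (ewC_nonneg hθ1 j)
        (Real.rpow_nonneg (by positivity) _))) (hsum1.mul_left C)]
    exact ENNReal.ofReal_ne_top
  calc ∫ x in Set.Ioi (0:ℝ),
        x ^ r * (θ * a * b * x ^ (a - 1) * exp (-(b * x ^ a))
          * (1 - exp (-(b * x ^ a))) ^ (θ - 1))
      = ∫ x in Set.Ioi (0:ℝ), ∑' j, G j x :=
        setIntegral_congr_fun measurableSet_Ioi hpt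
    _ = ∑' j, ∫ x in Set.Ioi (0:ℝ), G j x :=
        integral_tsum (fun j => (hGint j).1) hlint
    _ = ∑' j : ℕ, C * (ewC θ j * ((j:ℝ) + 1) ^ (-(1 + s))) := tsum_congr hGval
    _ = C * ∑' j : ℕ, ewC θ j * ((j:ℝ) + 1) ^ (-(1 + s)) := tsum_mul_left
    _ = θ * Real.Gamma (1 + r / a) / b ^ (r / a)
          * ∑' j : ℕ, (∏ i ∈ Finset.range j, (θ - 1 - i)) / (Nat.factorial j)
              * (-1:ℝ) ^ j / ((j : ℝ) + 1) ^ (1 + r / a) := by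
        rw [hC, hs]
        congr 1
        apply tsum_congr
        intro j
        rw [ewC_cast, Real.rpow_neg (by positivity)]
        ring
end

section
/- The local dependence function δ(x,y) = ∂²(ln f(x,y))/∂x∂y of the BGW density equals a²b₁b₂ x^{a-1}y^{a-1} e^{-Z}[(2-θ)/(1-e^{-Z})² - θ/(1-θe^{-Z})²], where Z = b₁x^a + b₂y^a; in particular δ(x,y) = 0 when θ = 1. -/
open Real

/-- The BGW joint density. -/
noncomputable def bgwPDF (a b₁ b₂ θ : ℝ) (x y : ℝ) : ℝ :=
  θ * a ^ 2 * b₁ * b₂ * x ^ (a - 1) * y ^ (a - 1)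
    * exp (-(b₁ * x ^ a + b₂ * y ^ a))
    * (1 - exp (-(b₁ * x ^ a + b₂ * y ^ a))) ^ (θ - 2)
    * (1 - θ * exp (-(b₁ * x ^ a + b₂ * y ^ a)))

lemma log_bgw (a b₁ b₂ θ x y : ℝ) (ha : 0 < a) (hθ0 : 0 < θ) (hθ1 : θ ≤ 1)
    (hb₁ : 0 < b₁) (hb₂ : 0 < b₂) (hx : 0 < x) (hy : 0 < y) :
    log (bgwPDF a b₁ b₂ θ x y)
      = log θ + 2 * log a + log b₁ + log b₂ + (a - 1) * log x + (a - 1) * log y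
        - (b₁ * x ^ a + b₂ * y ^ a)
        + (θ - 2) * log (1 - exp (-(b₁ * x ^ a + b₂ * y ^ a)))
        + log (1 - θ * exp (-(b₁ * x ^ a + b₂ * y ^ a))) := by
  have hZ : 0 < b₁ * x ^ a + b₂ * y ^ a := by positivity
  have hEp : 0 < exp (-(b₁ * x ^ a + b₂ * y ^ a)) := exp_pos _
  have hE1 : exp (-(b₁ * x ^ a + b₂ * y ^ a)) < 1 := by
    rw [exp_lt_one_iff]; linarith
  have h1 : 0 < 1 - exp (-(b₁ * x ^ a + b₂ * y ^ a)) := by linarith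
  have h2 : 0 < 1 - θ * exp (-(b₁ * x ^ a + b₂ * y ^ a)) := by nlinarith
  have hA : (0:ℝ) < θ * a ^ 2 * b₁ * b₂ * x ^ (a - 1) * y ^ (a - 1)
      * exp (-(b₁ * x ^ a + b₂ * y ^ a)) := by positivity
  have hB : (0:ℝ) < (1 - exp (-(b₁ * x ^ a + b₂ * y ^ a))) ^ (θ - 2) :=
    Real.rpow_pos_of_pos h1 _
  rw [bgwPDF,
    log_mul (mul_pos hA hB).ne' h2.ne',
    log_mul hA.ne' hB.ne',
    Real.log_rpow h1,
    log_mul (by positivity) hEp.ne',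
    log_exp,
    log_mul (by positivity) (Real.rpow_pos_of_pos hy _).ne',
    Real.log_rpow hy,
    log_mul (by positivity) (Real.rpow_pos_of_pos hx _).ne',
    Real.log_rpow hx,
    log_mul (by positivity) hb₂.ne',
    log_mul (by positivity) hb₁.ne',
    log_mul hθ0.ne' (by positivity),
    log_pow]
  push_cast
  ring
lemma inner_hasDeriv (a b₁ b₂ θ x y : ℝ) (ha : 0 < a) (hθ0 : 0 < θ) (hθ1 : θ ≤ 1)
    (hb₁ : 0 < b₁) (hb₂ : 0 < b₂) (hx : 0 < x) (hy : 0 < y) :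
    HasDerivAt (fun x' : ℝ =>
      log θ + 2 * log a + log b₁ + log b₂ + (a - 1) * log x' + (a - 1) * log y
        - (b₁ * x' ^ a + b₂ * y ^ a)
        + (θ - 2) * log (1 - exp (-(b₁ * x' ^ a + b₂ * y ^ a)))
        + log (1 - θ * exp (-(b₁ * x' ^ a + b₂ * y ^ a))))
      ((a - 1) / x - b₁ * (a * x ^ (a - 1))
        + (θ - 2) * (b₁ * (a * x ^ (a - 1)) * exp (-(b₁ * x ^ a + b₂ * y ^ a))
            / (1 - exp (-(b₁ * x ^ a + b₂ * y ^ a))))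
        + θ * (b₁ * (a * x ^ (a - 1)) * exp (-(b₁ * x ^ a + b₂ * y ^ a)))
            / (1 - θ * exp (-(b₁ * x ^ a + b₂ * y ^ a)))) x := by
  have hZ : 0 < b₁ * x ^ a + b₂ * y ^ a := by positivity
  have hEp : 0 < exp (-(b₁ * x ^ a + b₂ * y ^ a)) := exp_pos _
  have hE1 : exp (-(b₁ * x ^ a + b₂ * y ^ a)) < 1 := by rw [exp_lt_one_iff]; linarith
  have h1 : 0 < 1 - exp (-(b₁ * x ^ a + b₂ * y ^ a)) := by linarith
  have h2 : 0 < 1 - θ * exp (-(b₁ * x ^ a + b₂ * y ^ a)) := by nlinarith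
  have hpow : HasDerivAt (fun x' : ℝ => x' ^ a) (a * x ^ (a - 1)) x :=
    Real.hasDerivAt_rpow_const (Or.inl hx.ne')
  have hZ' : HasDerivAt (fun x' : ℝ => b₁ * x' ^ a + b₂ * y ^ a)
      (b₁ * (a * x ^ (a - 1))) x := (hpow.const_mul b₁).add_const _
  have hE : HasDerivAt (fun x' : ℝ => exp (-(b₁ * x' ^ a + b₂ * y ^ a)))
      (exp (-(b₁ * x ^ a + b₂ * y ^ a)) * (-(b₁ * (a * x ^ (a - 1))))) x :=
    hZ'.neg.exp
  have hlogx : HasDerivAt (fun x' : ℝ => (a - 1) * log x') ((a - 1) * x⁻¹) x :=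
    (Real.hasDerivAt_log hx.ne').const_mul _
  have hlog1 : HasDerivAt (fun x' : ℝ =>
      (θ - 2) * log (1 - exp (-(b₁ * x' ^ a + b₂ * y ^ a))))
      ((θ - 2) * (-(exp (-(b₁ * x ^ a + b₂ * y ^ a)) * (-(b₁ * (a * x ^ (a - 1)))))
          / (1 - exp (-(b₁ * x ^ a + b₂ * y ^ a))))) x :=
    ((hE.const_sub 1).log h1.ne').const_mul _
  have hlog2 : HasDerivAt (fun x' : ℝ =>
      log (1 - θ * exp (-(b₁ * x' ^ a + b₂ * y ^ a))))
      (-(θ * (exp (-(b₁ * x ^ a + b₂ * y ^ a)) * (-(b₁ * (a * x ^ (a - 1))))))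
          / (1 - θ * exp (-(b₁ * x ^ a + b₂ * y ^ a)))) x :=
    ((hE.const_mul θ).const_sub 1).log h2.ne'
  have H := ((((hlogx.const_add (log θ + 2 * log a + log b₁ + log b₂)).add_const
      ((a - 1) * log y)).sub hZ').add hlog1).add hlog2
  refine H.congr_deriv ?_
  field_simp
lemma outer_hasDeriv (a b₁ b₂ θ x y : ℝ) (ha : 0 < a) (hθ0 : 0 < θ) (hθ1 : θ ≤ 1)
    (hb₁ : 0 < b₁) (hb₂ : 0 < b₂) (hx : 0 < x) (hy : 0 < y) :
    HasDerivAt (fun y' : ℝ =>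
      (a - 1) / x - b₁ * (a * x ^ (a - 1))
        + (θ - 2) * (b₁ * (a * x ^ (a - 1)) * exp (-(b₁ * x ^ a + b₂ * y' ^ a))
            / (1 - exp (-(b₁ * x ^ a + b₂ * y' ^ a))))
        + θ * (b₁ * (a * x ^ (a - 1)) * exp (-(b₁ * x ^ a + b₂ * y' ^ a)))
            / (1 - θ * exp (-(b₁ * x ^ a + b₂ * y' ^ a))))
      (a ^ 2 * b₁ * b₂ * x ^ (a - 1) * y ^ (a - 1)
        * exp (-(b₁ * x ^ a + b₂ * y ^ a))
        * ((2 - θ) / (1 - exp (-(b₁ * x ^ a + b₂ * y ^ a))) ^ 2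
            - θ / (1 - θ * exp (-(b₁ * x ^ a + b₂ * y ^ a))) ^ 2)) y := by
  have hZ : 0 < b₁ * x ^ a + b₂ * y ^ a := by positivity
  have hEp : 0 < exp (-(b₁ * x ^ a + b₂ * y ^ a)) := exp_pos _
  have hE1 : exp (-(b₁ * x ^ a + b₂ * y ^ a)) < 1 := by rw [exp_lt_one_iff]; linarith
  have h1 : 0 < 1 - exp (-(b₁ * x ^ a + b₂ * y ^ a)) := by linarith
  have h2 : 0 < 1 - θ * exp (-(b₁ * x ^ a + b₂ * y ^ a)) := by nlinarith
  have hpow : HasDerivAt (fun y' : ℝ => y' ^ a) (a * y ^ (a - 1)) y :=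
    Real.hasDerivAt_rpow_const (Or.inl hy.ne')
  have hZ' : HasDerivAt (fun y' : ℝ => b₁ * x ^ a + b₂ * y' ^ a)
      (b₂ * (a * y ^ (a - 1))) y := (hpow.const_mul b₂).const_add _
  have hE : HasDerivAt (fun y' : ℝ => exp (-(b₁ * x ^ a + b₂ * y' ^ a)))
      (exp (-(b₁ * x ^ a + b₂ * y ^ a)) * (-(b₂ * (a * y ^ (a - 1))))) y :=
    hZ'.neg.exp
  have hnum := hE.const_mul (b₁ * (a * x ^ (a - 1)))
  have hden := hE.const_sub 1
  have hterm1 := ((hnum.div hden h1.ne').const_mul (θ - 2)).const_add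
      ((a - 1) / x - b₁ * (a * x ^ (a - 1)))
  have hnum2 := hnum.const_mul θ
  have hden2 := (hE.const_mul θ).const_sub 1
  have H := hterm1.add (hnum2.div hden2 h2.ne')
  refine H.congr_deriv ?_
  field_simp
  ring
/-- The local dependence function `δ(x,y) = ∂²(ln f)/∂x∂y` of the BGW density equals
`a²b₁b₂ x^{a-1}y^{a-1} e^{-Z}[(2-θ)/(1-e^{-Z})² - θ/(1-θe^{-Z})²]`, `Z = b₁x^a + b₂y^a`;
in particular it vanishes when `θ = 1`. -/
theorem bgw_local_dependence (a b₁ b₂ θ : ℝ) (ha : 0 < a) (hb₁ : 0 < b₁) (hb₂ : 0 < b₂)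
    (hθ0 : 0 < θ) (hθ1 : θ ≤ 1) (x y : ℝ) (hx : 0 < x) (hy : 0 < y) :
    deriv (fun y' : ℝ => deriv (fun x' : ℝ => Real.log (bgwPDF a b₁ b₂ θ x' y')) x) y
        = a ^ 2 * b₁ * b₂ * x ^ (a - 1) * y ^ (a - 1)
            * exp (-(b₁ * x ^ a + b₂ * y ^ a))
            * ((2 - θ) / (1 - exp (-(b₁ * x ^ a + b₂ * y ^ a))) ^ 2
                - θ / (1 - θ * exp (-(b₁ * x ^ a + b₂ * y ^ a))) ^ 2)
      ∧ (θ = 1 →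
          a ^ 2 * b₁ * b₂ * x ^ (a - 1) * y ^ (a - 1)
            * exp (-(b₁ * x ^ a + b₂ * y ^ a))
            * ((2 - θ) / (1 - exp (-(b₁ * x ^ a + b₂ * y ^ a))) ^ 2
                - θ / (1 - θ * exp (-(b₁ * x ^ a + b₂ * y ^ a))) ^ 2) = 0) := by
  have key : ∀ y' : ℝ, 0 < y' →
      deriv (fun x' : ℝ => Real.log (bgwPDF a b₁ b₂ θ x' y')) x
        = (a - 1) / x - b₁ * (a * x ^ (a - 1))
            + (θ - 2) * (b₁ * (a * x ^ (a - 1)) * exp (-(b₁ * x ^ a + b₂ * y' ^ a))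
                / (1 - exp (-(b₁ * x ^ a + b₂ * y' ^ a))))
            + θ * (b₁ * (a * x ^ (a - 1)) * exp (-(b₁ * x ^ a + b₂ * y' ^ a)))
                / (1 - θ * exp (-(b₁ * x ^ a + b₂ * y' ^ a))) := by
    intro y' hy'
    have heq : (fun x' : ℝ => Real.log (bgwPDF a b₁ b₂ θ x' y'))
        =ᶠ[nhds x] (fun x' : ℝ =>
          log θ + 2 * log a + log b₁ + log b₂ + (a - 1) * log x' + (a - 1) * log y'
            - (b₁ * x' ^ a + b₂ * y' ^ a)
            + (θ - 2) * log (1 - exp (-(b₁ * x' ^ a + b₂ * y' ^ a)))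
            + log (1 - θ * exp (-(b₁ * x' ^ a + b₂ * y' ^ a)))) :=
      (eventually_gt_nhds hx).mono fun x' hx' =>
        log_bgw a b₁ b₂ θ x' y' ha hθ0 hθ1 hb₁ hb₂ hx' hy'
    rw [heq.deriv_eq,
      (inner_hasDeriv a b₁ b₂ θ x y' ha hθ0 hθ1 hb₁ hb₂ hx hy').deriv]
  have houter : (fun y' : ℝ => deriv (fun x' : ℝ => Real.log (bgwPDF a b₁ b₂ θ x' y')) x)
      =ᶠ[nhds y] (fun y' : ℝ =>
        (a - 1) / x - b₁ * (a * x ^ (a - 1))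
          + (θ - 2) * (b₁ * (a * x ^ (a - 1)) * exp (-(b₁ * x ^ a + b₂ * y' ^ a))
              / (1 - exp (-(b₁ * x ^ a + b₂ * y' ^ a))))
          + θ * (b₁ * (a * x ^ (a - 1)) * exp (-(b₁ * x ^ a + b₂ * y' ^ a)))
              / (1 - θ * exp (-(b₁ * x ^ a + b₂ * y' ^ a)))) :=
    (eventually_gt_nhds hy).mono fun y' hy' => key y' hy'
  constructor
  · rw [houter.deriv_eq,
      (outer_hasDeriv a b₁ b₂ θ x y ha hθ0 hθ1 hb₁ hb₂ hx hy).deriv]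
  · intro h
    subst h
    norm_num
end

section
/- For 0 < θ ≤ 1 and Z > 0, the quantity (2-θ)/(1-e^{-Z})² - θ/(1-θe^{-Z})² is nonnegative; hence the local dependence function of the BGW density is nonnegative and the BGW density is totally positive of order 2 (TP2). -/
open Real

/-- For `0 < θ ≤ 1` and `Z > 0`, `(2-θ)/(1-e^{-Z})² - θ/(1-θe^{-Z})² ≥ 0`; hence, by the
Holland–Wang criterion, the local dependence function of the BGW density is nonnegative
and the BGW density is TP2. -/
theorem bgw_tp2 (θ : ℝ) (hθ0 : 0 < θ) (hθ1 : θ ≤ 1) (Z : ℝ) (hZ : 0 < Z) :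
    0 ≤ (2 - θ) / (1 - exp (-Z)) ^ 2 - θ / (1 - θ * exp (-Z)) ^ 2 := by
  set u := exp (-Z) with hu
  have hu0 : 0 < u := exp_pos _
  have hu1 : u < 1 := by
    rw [hu, exp_lt_one_iff]; linarith
  have h1 : 0 < 1 - u := by linarith
  have h2 : 0 < 1 - θ * u := by nlinarith
  rw [sub_nonneg, div_le_div_iff₀ (by positivity) (by positivity)]
  nlinarith [sq_nonneg (1 - u), sq_nonneg (u * (1 - θ)), mul_pos hu0 h1,
    sq_nonneg ((1 - θ * u) - (1 - u)), mul_pos h1 h2]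
end

section
/- For (X,Y) ~ BGW(a,b₁,b₂,θ), the regression function is E[Y | X = x] = (ab₁Γ(1+1/a)x^{a-1}/(b₂^{1/a} f_X(x))) · ∑_{j=1}^∞ binom(θ,j)(-1)^{j+1} j^{1-1/a} e^{-jb₁x^a}, where f_X is the marginal density of X; in particular, when a = 1 this reduces to E[Y|X=x] = (b₁/(b₂ f_X(x)))·[1-(1-e^{-b₁x})^θ]. -/
open Real

namespace BGWaux

/-- generalized binomial coefficient `binom t j` -/
noncomputable def bc (t : ℝ) (j : ℕ) : ℝ :=
  (∏ i ∈ Finset.range j, (t - i)) / (Nat.factorial j : ℝ)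

lemma bc_zero (t : ℝ) : bc t 0 = 1 := by simp [bc]

lemma bc_succ (t : ℝ) (j : ℕ) : bc t (j + 1) = bc t j * ((t - j) / (j + 1)) := by
  unfold bc
  rw [Finset.prod_range_succ, Nat.factorial_succ]
  push_cast
  rw [div_mul_div_comm, mul_comm ((j:ℝ) + 1)]

lemma bc_shift (t : ℝ) (j : ℕ) : bc t (j + 1) = t / (j + 1) * bc (t - 1) j := by
  unfold bc
  rw [Finset.prod_range_succ', Nat.factorial_succ]
  push_cast
  have h1 : (Nat.factorial j : ℝ) ≠ 0 := Nat.cast_ne_zero.2 (Nat.factorial_ne_zero j)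
  have h2 : ((j : ℝ) + 1) ≠ 0 := by positivity
  have h3 : ∀ i ∈ Finset.range j, t - ((i:ℝ) + 1) = (t - 1) - i := by intros; ring
  rw [Finset.prod_congr rfl h3]
  field_simp
  ring

lemma bc_abs_le_one {θ : ℝ} (h0 : 0 < θ) (h1 : θ ≤ 1) : ∀ m, |bc θ m| ≤ 1 := by
  intro m
  induction m with
  | zero => simp [bc_zero]
  | succ j ih =>
    rw [bc_succ, abs_mul]
    have h2 : |(θ - j) / (j + 1)| ≤ 1 := by
      rw [abs_div, div_le_one (by positivity)]
      rw [abs_le]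
      constructor
      · have : (0:ℝ) ≤ j := Nat.cast_nonneg j
        simp only [abs_of_pos (show (0:ℝ) < (j:ℝ)+1 by positivity)]
        linarith
      · have : (0:ℝ) ≤ j := Nat.cast_nonneg j
        simp only [abs_of_pos (show (0:ℝ) < (j:ℝ)+1 by positivity)]
        linarith
    calc |bc θ j| * |(θ - j) / (j + 1)| ≤ 1 * 1 :=
          mul_le_mul ih h2 (abs_nonneg _) zero_le_one
      _ = 1 := by ring

lemma bc_abs_le_poly (t : ℝ) (m : ℕ) (hm : |t| ≤ m) : ∀ j, |bc t j| ≤ ((j:ℝ) + 1) ^ m := by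
  intro j
  induction j with
  | zero => simp [bc_zero]
  | succ j ih =>
    push_cast
    have hj1 : (0:ℝ) < (j:ℝ) + 1 := by positivity
    have hP : (0:ℝ) < ((j:ℝ) + 1) ^ m := by positivity
    rw [bc_succ, abs_mul]
    have habs : |(t - j) / ((j:ℝ) + 1)| ≤ ((m:ℝ) + j) / ((j:ℝ) + 1) := by
      rw [abs_div, abs_of_pos hj1]
      gcongr
      calc |t - j| ≤ |t| + |(j:ℝ)| := abs_sub t (j:ℝ)
        _ ≤ (m:ℝ) + j := by
            rw [abs_of_nonneg (show (0:ℝ) ≤ (j:ℝ) from Nat.cast_nonneg j)]; linarith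
    have key : ∀ n : ℕ, ((j:ℝ)+1)^n * ((j:ℝ)+1+n) ≤ ((j:ℝ)+2)^n * ((j:ℝ)+1) := by
      intro n
      induction n with
      | zero => simp
      | succ n ihn =>
        have hpow : ((j:ℝ)+1)^n ≤ ((j:ℝ)+2)^n := by
          apply pow_le_pow_left₀ hj1.le (by linarith)
        push_cast
        rw [pow_succ, pow_succ]
        nlinarith [mul_le_mul_of_nonneg_right ihn hj1.le,
          mul_le_mul_of_nonneg_right hpow hj1.le]
    have key2 : ((j:ℝ)+1)^m * (((m:ℝ)+j)/((j:ℝ)+1)) ≤ ((j:ℝ)+2)^m := by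
      rw [mul_div_assoc', div_le_iff₀ hj1]
      nlinarith [key m, hP.le]
    calc |bc t j| * |(t - j) / ((j:ℝ) + 1)|
        ≤ ((j:ℝ) + 1) ^ m * (((m:ℝ) + j) / ((j:ℝ) + 1)) :=
          mul_le_mul ih habs (abs_nonneg _) hP.le
      _ ≤ ((j:ℝ) + 2) ^ m := key2
      _ = ((j:ℝ) + 1 + 1) ^ m := by ring
lemma summable_poly_geom (m : ℕ) {q : ℝ} (h0 : 0 ≤ q) (h1 : q < 1) :
    Summable (fun j : ℕ => ((j:ℝ) + 1) ^ m * q ^ j) := by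
  rcases eq_or_lt_of_le h0 with hq | hq
  · apply summable_of_ne_finset_zero (s := {0})
    intro j hj
    simp only [Finset.mem_singleton] at hj
    rw [← hq, zero_pow hj, mul_zero]
  · have hgeo := summable_pow_mul_geometric_of_norm_lt_one (R := ℝ) m
      (r := q) (by rwa [Real.norm_eq_abs, abs_of_pos hq])
    have h2 : Summable (fun n : ℕ => ((n + 1 : ℕ) : ℝ) ^ m * q ^ (n + 1)) :=
      (summable_nat_add_iff 1).mpr hgeo
    refine (h2.mul_left q⁻¹).congr fun n => ?_
    push_cast
    rw [pow_succ]
    field_simp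

lemma summable_bc_poly (t : ℝ) (k : ℕ) {q : ℝ} (h0 : 0 ≤ q) (h1 : q < 1) :
    Summable (fun j : ℕ => |bc t j| * ((j:ℝ) + 1) ^ k * q ^ j) := by
  obtain ⟨m, hm⟩ := exists_nat_ge |t|
  refine Summable.of_nonneg_of_le (fun j => by positivity) (fun j => ?_)
    (summable_poly_geom (m + k) h0 h1)
  rw [pow_add]
  have h2 := bc_abs_le_poly t m hm j
  have h3 : (0:ℝ) ≤ ((j:ℝ) + 1) ^ k := by positivity
  have h4 : (0:ℝ) ≤ q ^ j := by positivity
  calc |bc t j| * ((j:ℝ) + 1) ^ k * q ^ j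
      ≤ ((j:ℝ) + 1) ^ m * ((j:ℝ) + 1) ^ k * q ^ j := by
        apply mul_le_mul_of_nonneg_right (mul_le_mul_of_nonneg_right h2 h3) h4
    _ = ((j:ℝ) + 1) ^ m * ((j:ℝ) + 1) ^ k * q ^ j := rfl
lemma hasSum_binomial (t : ℝ) {u : ℝ} (hu : |u| < 1) :
    HasSum (fun j : ℕ => bc t j * u ^ j) ((1 + u) ^ t) := by
  set σ : ℝ := (1 + |u|) / 2 with hσdef
  have hσ0 : 0 < σ := by positivity
  have hσ1 : σ < 1 := by rw [hσdef]; linarith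
  have huσ : |u| < σ := by rw [hσdef]; linarith
  -- summability of the series at any |z| < 1
  have hsum : ∀ {z : ℝ}, |z| < 1 → Summable (fun j : ℕ => bc t j * z ^ j) := by
    intro z hz
    refine Summable.of_norm_bounded (summable_bc_poly t 0 (abs_nonneg z) hz) fun j => ?_
    rw [Real.norm_eq_abs, abs_mul, abs_pow, pow_zero, mul_one]
  -- the uniform bound for the derivative series on the ball of radius σ
  set U : ℕ → ℝ := fun n => |bc t n| * ((n:ℝ) + 1) ^ 1 * σ ^ n * σ⁻¹ with hUdef
  have hUsum : Summable U := (summable_bc_poly t 1 hσ0.le hσ1).mul_right σ⁻¹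
  have hUbound : ∀ (n : ℕ) (y : ℝ), |y| ≤ σ →
      ‖bc t n * ((n:ℝ) * y ^ (n - 1))‖ ≤ U n := by
    intro n y hy
    rcases n with _ | j
    · simp only [Nat.cast_zero, zero_mul, mul_zero, norm_zero, hUdef]
      positivity
    · rw [Real.norm_eq_abs, abs_mul, abs_mul, abs_pow, Nat.add_sub_cancel]
      have h1 : |y| ^ j ≤ σ ^ j := pow_le_pow_left₀ (abs_nonneg y) hy j
      have h2 : σ ^ j = σ ^ (j + 1) * σ⁻¹ := by
        rw [pow_succ, mul_assoc, mul_inv_cancel₀ hσ0.ne', mul_one]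
      have h3 : |((j + 1 : ℕ) : ℝ)| = (j:ℝ) + 1 := by
        rw [abs_of_nonneg (by positivity)]; push_cast; ring
      rw [h3, hUdef]
      simp only [pow_one]
      push_cast
      calc |bc t (j + 1)| * (((j:ℝ) + 1) * |y| ^ j)
          ≤ |bc t (j + 1)| * (((j:ℝ) + 1) * σ ^ j) := by
            apply mul_le_mul_of_nonneg_left
              (mul_le_mul_of_nonneg_left h1 (by positivity)) (abs_nonneg _)
        _ = |bc t (j + 1)| * ((j:ℝ) + 1) * σ ^ (j + 1) * σ⁻¹ := by rw [h2]; ring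
        _ ≤ |bc t (j + 1)| * ((j:ℝ) + 1 + 1) * σ ^ (j + 1) * σ⁻¹ := by
            have : (0:ℝ) ≤ |bc t (j+1)| := abs_nonneg _
            have h4 : (0:ℝ) ≤ σ ^ (j+1) := by positivity
            have h5 : (0:ℝ) ≤ σ⁻¹ := by positivity
            apply mul_le_mul_of_nonneg_right (mul_le_mul_of_nonneg_right ?_ h4) h5
            nlinarith
  set g : ℝ → ℝ := fun z => ∑' j : ℕ, bc t j * z ^ j with hgdef
  set g' : ℝ → ℝ := fun z => ∑' j : ℕ, bc t j * ((j:ℝ) * z ^ (j - 1)) with hg'def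
  have hball : ∀ y : ℝ, y ∈ Metric.ball (0:ℝ) σ ↔ |y| < σ := by
    intro y; rw [Metric.mem_ball, Real.dist_eq, sub_zero]
  have hderiv : ∀ y ∈ Metric.ball (0:ℝ) σ, HasDerivAt g (g' y) y := by
    intro y hy
    exact hasDerivAt_tsum_of_isPreconnected hUsum Metric.isOpen_ball
      (convex_ball (0:ℝ) σ).isPreconnected
      (fun n z _ => (hasDerivAt_pow n z).const_mul (bc t n))
      (fun n z hz => hUbound n z ((hball z).1 hz).le)
      (Metric.mem_ball_self hσ0)
      (hsum (by norm_num)) hy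
  have hsum' : ∀ {y : ℝ}, |y| < σ →
      Summable (fun j : ℕ => bc t j * ((j:ℝ) * y ^ (j - 1))) := by
    intro y hy
    exact Summable.of_norm_bounded hUsum fun n => hUbound n y hy.le
  -- the ODE : (1+y) g' y = t * g y
  have hode : ∀ y : ℝ, |y| < σ → (1 + y) * g' y = t * g y := by
    intro y hy
    have hy1 : |y| < 1 := hy.trans hσ1
    have S1 : HasSum (fun j : ℕ => bc t j * ((j:ℝ) * y ^ (j - 1))) (g' y) :=
      (hsum' hy).hasSum
    have S0 : HasSum (fun j : ℕ => bc t j * y ^ j) (g y) := (hsum hy1).hasSum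
    have S2 : HasSum (fun j : ℕ => bc t (j + 1) * (((j:ℝ) + 1) * y ^ j)) (g' y) := by
      have h0 : (fun j : ℕ => bc t (j + 1) * (((j:ℝ) + 1) * y ^ j))
          = fun j : ℕ => bc t (j + 1) * (((j + 1 : ℕ):ℝ) * y ^ ((j + 1) - 1)) := by
        funext j; push_cast [Nat.add_sub_cancel]; ring
      rw [h0]
      apply (hasSum_nat_add_iff (f := fun j : ℕ => bc t j * ((j:ℝ) * y ^ (j - 1))) 1).mpr
      simpa using S1
    have hfun : (fun j : ℕ => bc t (j + 1) * (((j:ℝ) + 1) * y ^ j))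
        = fun j : ℕ => t * (bc t j * y ^ j) - (j:ℝ) * (bc t j * y ^ j) := by
      funext j
      rw [bc_succ]
      have hj : ((j:ℝ) + 1) ≠ 0 := by positivity
      field_simp
    have S2' := hfun ▸ S2
    have S3 : HasSum (fun j : ℕ => t * (bc t j * y ^ j)) (t * g y) := S0.mul_left t
    have h4 : (fun j : ℕ => y * (bc t j * ((j:ℝ) * y ^ (j - 1))))
        = fun j : ℕ => (j:ℝ) * (bc t j * y ^ j) := by
      funext j
      rcases j with _ | i
      · simp
      · rw [Nat.add_sub_cancel, pow_succ]
        push_cast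
        ring
    have S4 : HasSum (fun j : ℕ => (j:ℝ) * (bc t j * y ^ j)) (y * g' y) :=
      h4 ▸ S1.mul_left y
    have h5 := S2'.unique (S3.sub S4)
    linarith
  -- constancy of g z * (1+z)^(-t) on the ball
  have hconst : ∀ y ∈ Metric.ball (0:ℝ) σ,
      g y * (1 + y) ^ (-t) = g 0 * (1 + (0:ℝ)) ^ (-t) := by
    have hd : ∀ y ∈ Metric.ball (0:ℝ) σ,
        HasDerivAt (fun z : ℝ => g z * (1 + z) ^ (-t)) 0 y := by
      intro y hy
      have hyσ : |y| < σ := (hball y).1 hy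
      have hy1 : 0 < 1 + y := by
        have := abs_lt.1 (hyσ.trans hσ1)
        linarith [this.1]
      have d1 : HasDerivAt (fun z : ℝ => 1 + z) 1 y := (hasDerivAt_id y).const_add 1
      have d2 : HasDerivAt (fun z : ℝ => (1 + z) ^ (-t))
          (-t * (1 + y) ^ (-t - 1) * 1) y := by
        exact (Real.hasDerivAt_rpow_const (x := 1 + y) (p := -t) (Or.inl hy1.ne')).comp y d1
      have d3 := (hderiv y hy).mul d2
      have e1 : (1 + y) ^ (-t) = (1 + y) ^ (-t - 1) * (1 + y) := by
        rw [← Real.rpow_add_one hy1.ne' (-t - 1)]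
        norm_num
      have e2 : g' y * (1 + y) ^ (-t) + g y * (-t * (1 + y) ^ (-t - 1) * 1) = 0 := by
        rw [e1]
        have h := hode y hyσ
        linear_combination ((1 + y) ^ (-t - 1)) * h
      rwa [e2] at d3
    intro y hy
    refine (convex_ball (0:ℝ) σ).is_const_of_fderivWithin_eq_zero (𝕜 := ℝ)
      (f := fun z : ℝ => g z * (1 + z) ^ (-t)) ?_ ?_ hy (Metric.mem_ball_self hσ0)
    · intro z hz
      exact ((hd z hz).differentiableAt).differentiableWithinAt
    · intro z hz
      have h6 : HasFDerivAt (fun z : ℝ => g z * (1 + z) ^ (-t))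
          (0 : ℝ →L[ℝ] ℝ) z := by
        have h6a := (hd z hz).hasFDerivAt
        have e0 : (ContinuousLinearMap.toSpanSingleton ℝ (0:ℝ)) = 0 := by
          ext w; simp
        rwa [e0] at h6a
      rw [fderivWithin_eq_fderiv (Metric.isOpen_ball.uniqueDiffOn z hz)
        h6.differentiableAt]
      exact h6.fderiv
  -- evaluate the constant
  have hg0 : g 0 = 1 := by
    simp only [hgdef]
    rw [tsum_eq_single 0 ?_]
    · simp [bc_zero]
    · intro j hj
      rw [zero_pow hj, mul_zero]
  have hfinal : g u = (1 + u) ^ t := by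
    have h7 := hconst u ((hball u).2 huσ)
    rw [hg0] at h7
    have h8 : (0:ℝ) < 1 + u := by
      have := abs_lt.1 hu
      linarith [this.1]
    rw [Real.rpow_neg h8.le] at h7
    have h9 : (0:ℝ) < (1 + u) ^ t := Real.rpow_pos_of_pos h8 t
    have h10 : (1 + (0:ℝ)) ^ (-t) = 1 := by
      norm_num
    rw [h10, one_mul] at h7
    field_simp at h7
    linarith
  have := (hsum hu).hasSum
  rwa [show (∑' j : ℕ, bc t j * u ^ j) = g u from rfl, hfinal] at this
lemma bc_one (t : ℝ) : bc t 1 = t := by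
  rw [show (1:ℕ) = 0 + 1 from rfl, bc_succ, bc_zero]
  norm_num

lemma hasSum_theta_series (θ : ℝ) {u : ℝ} (h0 : 0 < u) (h1 : u < 1) :
    HasSum (fun j : ℕ => ((-1:ℝ) ^ j * bc θ (j + 1)) * ((j:ℝ) + 1) ^ 2 * u ^ (j + 1))
      (θ * u * (1 - u) ^ (θ - 2) * (1 - θ * u)) := by
  have hu : |(-u)| < 1 := by rwa [abs_neg, abs_of_pos h0]
  have h1u : (0:ℝ) < 1 - u := by linarith
  have e1u : (1:ℝ) + -u = 1 - u := by ring
  have B1 := hasSum_binomial (θ - 1) hu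
  have B2 := hasSum_binomial (θ - 2) hu
  rw [e1u] at B1 B2
  have A := B1.mul_left (θ * u)
  have Bs := B2.mul_left (-(θ * (θ - 1) * u ^ 2))
  set Bfun : ℕ → ℝ := fun j =>
    if j = 0 then 0 else -(θ * (θ - 1) * u ^ 2) * (bc (θ - 2) (j - 1) * (-u) ^ (j - 1))
    with hBfun
  have hBshift : (fun n : ℕ => Bfun (n + 1))
      = fun k : ℕ => -(θ * (θ - 1) * u ^ 2) * (bc (θ - 2) k * (-u) ^ k) := by
    funext k
    simp [hBfun]
  have B : HasSum Bfun (-(θ * (θ - 1) * u ^ 2) * (1 - u) ^ (θ - 2)) := by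
    have h := (hasSum_nat_add_iff (f := Bfun) 1).mp (by rw [hBshift]; exact Bs)
    simpa [hBfun] using h
  have total := A.add B
  have hfun : (fun j : ℕ => θ * u * (bc (θ - 1) j * (-u) ^ j) + Bfun j)
      = fun j : ℕ => ((-1:ℝ) ^ j * bc θ (j + 1)) * ((j:ℝ) + 1) ^ 2 * u ^ (j + 1) := by
    funext j
    rcases j with _ | k
    · simp only [hBfun, if_pos rfl, bc_shift, bc_zero]
      push_cast
      ring
    · have hk2 : ((k:ℝ) + 1 + 1) ≠ 0 := by positivity
      have hk1 : ((k:ℝ) + 1) ≠ 0 := by positivity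
      simp only [hBfun, if_neg (Nat.succ_ne_zero k), Nat.add_sub_cancel]
      rw [show k + 1 + 1 = (k + 1) + 1 from rfl, bc_shift θ (k + 1), bc_shift (θ - 1) k]
      push_cast
      have hneg : ∀ n : ℕ, (-u) ^ n = (-1:ℝ) ^ n * u ^ n := fun n => by
        rw [neg_eq_neg_one_mul, mul_pow]
      simp only [hneg]
      field_simp
      ring
  rw [hfun] at total
  have hval : θ * u * (1 - u) ^ (θ - 1) + -(θ * (θ - 1) * u ^ 2) * (1 - u) ^ (θ - 2)
      = θ * u * (1 - u) ^ (θ - 2) * (1 - θ * u) := by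
    rw [show θ - 1 = (θ - 2) + 1 by ring, Real.rpow_add_one h1u.ne']
    ring
  rwa [hval] at total
open MeasureTheory in
lemma integrableOn_rpow_exp {p q b : ℝ} (hp : 0 < p) (hq : -1 < q) (hb : 0 < b) :
    MeasureTheory.IntegrableOn (fun y : ℝ => y ^ q * Real.exp (-b * y ^ p))
      (Set.Ioi 0) := by
  have h1 : MeasureTheory.IntegrableOn
      (fun t : ℝ => t ^ ((q + 1) / p - 1) * Real.exp (-b * t)) (Set.Ioi 0) := by
    have h := integrableOn_rpow_mul_exp_neg_mul_rpow (p := 1) (s := (q + 1) / p - 1)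
      (b := b) (by have h0 : 0 < (q+1)/p := div_pos (by linarith) hp; linarith) one_pos hb
    refine h.congr_fun (fun y hy => ?_) measurableSet_Ioi
    beta_reduce
    rw [Real.rpow_one]
  have h2 := (MeasureTheory.integrableOn_Ioi_comp_rpow_iff'
    (f := fun t : ℝ => t ^ ((q + 1) / p - 1) * Real.exp (-b * t)) (p := p)
    hp.ne').mpr h1
  refine h2.congr_fun (fun y hy => ?_) measurableSet_Ioi
  have hy0 : (0:ℝ) < y := hy
  beta_reduce
  rw [smul_eq_mul, ← Real.rpow_mul hy0.le, ← mul_assoc, ← Real.rpow_add hy0]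
  congr 2
  field_simp
  ring
open MeasureTheory in
lemma bgw_numerator (a b₁ b₂ θ : ℝ) (ha : 0 < a) (hb₁ : 0 < b₁) (hb₂ : 0 < b₂)
    (hθ0 : 0 < θ) (hθ1 : θ ≤ 1) (x : ℝ) (hx : 0 < x) :
    ∫ y in Set.Ioi (0:ℝ), y * bgwPDF a b₁ b₂ θ x y
      = a * b₁ * Real.Gamma (1 + 1 / a) * x ^ (a - 1) * b₂ ^ (-(1 / a))
        * ∑' j : ℕ, ((-1:ℝ) ^ j * bc θ (j + 1)) * ((j:ℝ) + 1) ^ ((1:ℝ) - 1 / a)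
            * Real.exp (-(((j:ℝ) + 1) * b₁ * x ^ a)) := by
  have hxa : (0:ℝ) < x ^ a := Real.rpow_pos_of_pos hx a
  have hs0 : (0:ℝ) < b₁ * x ^ a := by positivity
  set s : ℝ := b₁ * x ^ a with hsdef
  set K : ℝ := a ^ 2 * b₁ * b₂ * x ^ (a - 1) with hKdef
  have hK0 : 0 < K := by
    have : (0:ℝ) < x ^ (a - 1) := Real.rpow_pos_of_pos hx _
    positivity
  set F : ℕ → ℝ → ℝ := fun j y =>
    (K * (((-1:ℝ) ^ j * bc θ (j + 1)) * ((j:ℝ) + 1) ^ 2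
        * Real.exp (-(((j:ℝ) + 1) * s))))
      * (y ^ a * Real.exp (-(((j:ℝ) + 1) * b₂) * y ^ a)) with hFdef
  -- pointwise series expansion
  have stepA : ∀ y ∈ Set.Ioi (0:ℝ), y * bgwPDF a b₁ b₂ θ x y = ∑' j : ℕ, F j y := by
    intro y hy
    have hy0 : (0:ℝ) < y := hy
    have hya : (0:ℝ) < y ^ a := Real.rpow_pos_of_pos hy0 a
    have hw0 : (0:ℝ) < s + b₂ * y ^ a := by positivity
    set u : ℝ := Real.exp (-(s + b₂ * y ^ a)) with hudef
    have hu0 : 0 < u := Real.exp_pos _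
    have hu1 : u < 1 := by
      rw [hudef, Real.exp_lt_one_iff]
      linarith
    have H := (hasSum_theta_series θ hu0 hu1).mul_left (K * y ^ a)
    have hterm : (fun j : ℕ => (K * y ^ a)
        * (((-1:ℝ) ^ j * bc θ (j + 1)) * ((j:ℝ) + 1) ^ 2 * u ^ (j + 1)))
        = fun j : ℕ => F j y := by
      funext j
      have hpow : u ^ (j + 1)
          = Real.exp (-(((j:ℝ) + 1) * s)) * Real.exp (-(((j:ℝ) + 1) * b₂) * y ^ a) := by
        rw [hudef, ← Real.exp_nat_mul, ← Real.exp_add]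
        congr 1
        push_cast
        ring
      rw [hpow, hFdef]
      ring
    rw [hterm] at H
    have hval : (K * y ^ a) * (θ * u * (1 - u) ^ (θ - 2) * (1 - θ * u))
        = y * bgwPDF a b₁ b₂ θ x y := by
      rw [bgwPDF]
      have hys : y ^ (a - 1) = y ^ a / y := Real.rpow_sub_one hy0.ne' a
      rw [show -(b₁ * x ^ a + b₂ * y ^ a) = -(s + b₂ * y ^ a) by rw [hsdef], ← hudef,
        hys, hKdef]
      field_simp
    rw [← hval]
    exact H.tsum_eq.symm
  rw [setIntegral_congr_fun measurableSet_Ioi stepA]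
  -- integrability of each term
  have hbase : ∀ j : ℕ, IntegrableOn
      (fun y : ℝ => y ^ a * Real.exp (-(((j:ℝ) + 1) * b₂) * y ^ a)) (Set.Ioi 0) :=
    fun j => integrableOn_rpow_exp ha (by linarith) (by positivity)
  have hint : ∀ j : ℕ, IntegrableOn (F j) (Set.Ioi 0) := by
    intro j
    rw [hFdef]
    exact (hbase j).const_mul _
  -- value of the base integral
  have hI : ∀ j : ℕ, (∫ y in Set.Ioi (0:ℝ),
      y ^ a * Real.exp (-(((j:ℝ) + 1) * b₂) * y ^ a))
      = (((j:ℝ) + 1) * b₂) ^ (-(a + 1) / a) * (1 / a) * Real.Gamma ((a + 1) / a) :=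
    fun j => integral_rpow_mul_exp_neg_mul_rpow ha (by linarith) (by positivity)
  have hInonneg : ∀ j : ℕ, (0:ℝ) ≤ (((j:ℝ) + 1) * b₂) ^ (-(a + 1) / a) * (1 / a)
      * Real.Gamma ((a + 1) / a) := by
    intro j
    have hΓ : 0 < Real.Gamma ((a + 1) / a) := Real.Gamma_pos_of_pos (by positivity)
    have : (0:ℝ) < (((j:ℝ) + 1) * b₂) ^ (-(a + 1) / a) :=
      Real.rpow_pos_of_pos (by positivity) _
    positivity
  -- norm integrals
  have hnormval : ∀ j : ℕ, (∫ y in Set.Ioi (0:ℝ), ‖F j y‖)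
      = ‖K * (((-1:ℝ) ^ j * bc θ (j + 1)) * ((j:ℝ) + 1) ^ 2
          * Real.exp (-(((j:ℝ) + 1) * s)))‖
        * ((((j:ℝ) + 1) * b₂) ^ (-(a + 1) / a) * (1 / a) * Real.Gamma ((a + 1) / a)) := by
    intro j
    rw [← hI j, ← integral_const_mul]
    refine setIntegral_congr_fun measurableSet_Ioi fun y hy => ?_
    have hy0 : (0:ℝ) < y := hy
    have h1 : (0:ℝ) ≤ y ^ a * Real.exp (-(((j:ℝ) + 1) * b₂) * y ^ a) := by
      have := Real.rpow_nonneg hy0.le a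
      positivity
    rw [hFdef]
    simp only [norm_mul, Real.norm_eq_abs]
    rw [abs_of_nonneg (Real.rpow_nonneg hy0.le a), abs_of_pos (Real.exp_pos _),
      abs_of_pos (Real.exp_pos _), abs_mul, abs_mul]
  -- summability of the norm integrals
  set q : ℝ := Real.exp (-s) with hqdef
  have hq0 : 0 < q := Real.exp_pos _
  have hq1 : q < 1 := by rw [hqdef, Real.exp_lt_one_iff]; linarith
  have hqpow : ∀ j : ℕ, Real.exp (-(((j:ℝ) + 1) * s)) = q * q ^ j := by
    intro j
    rw [hqdef, ← Real.exp_nat_mul, ← Real.exp_add]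
    congr 1
    push_cast
    ring
  set M : ℝ := K * (b₂ ^ (-(a + 1) / a) * (1 / a) * Real.Gamma ((a + 1) / a)) * q
    with hMdef
  have hΓpos : 0 < Real.Gamma ((a + 1) / a) := Real.Gamma_pos_of_pos (by positivity)
  have hnorm : Summable (fun j : ℕ => ∫ y in Set.Ioi (0:ℝ), ‖F j y‖) := by
    refine Summable.of_nonneg_of_le
      (fun j => integral_nonneg fun y => norm_nonneg _)
      (fun j => ?_) (((summable_poly_geom 2 hq0.le hq1).mul_left M))
    rw [hnormval j]
    have e1 : (((j:ℝ) + 1) * b₂) ^ (-(a + 1) / a)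
        = ((j:ℝ) + 1) ^ (-(a + 1) / a) * b₂ ^ (-(a + 1) / a) :=
      Real.mul_rpow (by positivity) hb₂.le
    have e2 : ((j:ℝ) + 1) ^ (-(a + 1) / a) ≤ 1 := by
      apply Real.rpow_le_one_of_one_le_of_nonpos (by linarith [Nat.cast_nonneg (α := ℝ) j])
      have h7 : (0:ℝ) < (a + 1) / a := by positivity
      rw [neg_div]
      linarith
    have e3 : ‖K * (((-1:ℝ) ^ j * bc θ (j + 1)) * ((j:ℝ) + 1) ^ 2
        * Real.exp (-(((j:ℝ) + 1) * s)))‖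
        ≤ K * (((j:ℝ) + 1) ^ 2 * (q * q ^ j)) := by
      have habs : ‖K * (((-1:ℝ) ^ j * bc θ (j + 1)) * ((j:ℝ) + 1) ^ 2
          * Real.exp (-(((j:ℝ) + 1) * s)))‖
          = K * (|bc θ (j + 1)| * (((j:ℝ) + 1) ^ 2 * Real.exp (-(((j:ℝ) + 1) * s)))) := by
        rw [Real.norm_eq_abs, abs_mul, abs_of_pos hK0]
        congr 1
        rw [abs_mul, abs_mul, abs_of_pos (Real.exp_pos _),
          abs_of_nonneg (show (0:ℝ) ≤ ((j:ℝ) + 1) ^ 2 by positivity),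
          abs_mul, abs_pow, abs_neg, abs_one, one_pow, one_mul]
        ring
      rw [habs, hqpow j]
      have hb := bc_abs_le_one hθ0 hθ1 (j + 1)
      calc K * (|bc θ (j + 1)| * (((j:ℝ) + 1) ^ 2 * (q * q ^ j)))
          ≤ K * (1 * (((j:ℝ) + 1) ^ 2 * (q * q ^ j))) := by
            apply mul_le_mul_of_nonneg_left ?_ hK0.le
            apply mul_le_mul_of_nonneg_right hb (by positivity)
        _ = K * (((j:ℝ) + 1) ^ 2 * (q * q ^ j)) := by ring
    calc ‖K * (((-1:ℝ) ^ j * bc θ (j + 1)) * ((j:ℝ) + 1) ^ 2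
          * Real.exp (-(((j:ℝ) + 1) * s)))‖
          * ((((j:ℝ) + 1) * b₂) ^ (-(a + 1) / a) * (1 / a) * Real.Gamma ((a + 1) / a))
        ≤ (K * (((j:ℝ) + 1) ^ 2 * (q * q ^ j)))
          * ((((j:ℝ) + 1) * b₂) ^ (-(a + 1) / a) * (1 / a) * Real.Gamma ((a + 1) / a)) :=
          mul_le_mul_of_nonneg_right e3 (hInonneg j)
      _ ≤ (K * (((j:ℝ) + 1) ^ 2 * (q * q ^ j)))
          * (b₂ ^ (-(a + 1) / a) * (1 / a) * Real.Gamma ((a + 1) / a)) := by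
          rw [e1]
          have hbb : (0:ℝ) < b₂ ^ (-(a + 1) / a) := Real.rpow_pos_of_pos hb₂ _
          apply mul_le_mul_of_nonneg_left ?_ (by positivity)
          apply mul_le_mul_of_nonneg_right (mul_le_mul_of_nonneg_right ?_ (by positivity))
            hΓpos.le
          nlinarith [e2, hbb.le, Real.rpow_nonneg (show (0:ℝ) ≤ (j:ℝ)+1 by positivity) (-(a+1)/a)]
      _ = M * (((j:ℝ) + 1) ^ 2 * q ^ j) := by rw [hMdef]; ring
  -- swap sum and integral
  rw [← integral_tsum_of_summable_integral_norm hint hnorm]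
  -- evaluate each integral and identify with the claimed sum
  have hswap : ∀ j : ℕ, (∫ y in Set.Ioi (0:ℝ), F j y)
      = (a * b₁ * Real.Gamma (1 + 1 / a) * x ^ (a - 1) * b₂ ^ (-(1 / a)))
        * (((-1:ℝ) ^ j * bc θ (j + 1)) * ((j:ℝ) + 1) ^ ((1:ℝ) - 1 / a)
            * Real.exp (-(((j:ℝ) + 1) * b₁ * x ^ a))) := by
    intro j
    have hj1 : (0:ℝ) < (j:ℝ) + 1 := by positivity
    rw [hFdef]
    simp only []
    rw [integral_const_mul, hI j]
    have f1 : Real.Gamma ((a + 1) / a) = Real.Gamma (1 + 1 / a) := by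
      congr 1
      field_simp
    have f2 : (((j:ℝ) + 1) * b₂) ^ (-(a + 1) / a)
        = ((j:ℝ) + 1) ^ (-(a + 1) / a) * b₂ ^ (-(a + 1) / a) :=
      Real.mul_rpow hj1.le hb₂.le
    have f3 : (((j:ℝ) + 1):ℝ) ^ (2:ℕ) * ((j:ℝ) + 1) ^ (-(a + 1) / a)
        = ((j:ℝ) + 1) ^ ((1:ℝ) - 1 / a) := by
      rw [← Real.rpow_natCast ((j:ℝ) + 1) 2, ← Real.rpow_add hj1]
      congr 1
      push_cast
      field_simp
      ring
    have f4 : b₂ * b₂ ^ (-(a + 1) / a) = b₂ ^ (-(1 / a)) := by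
      nth_rewrite 1 [← Real.rpow_one b₂]
      rw [← Real.rpow_add hb₂]
      congr 1
      field_simp
      ring
    have f5 : Real.exp (-(((j:ℝ) + 1) * s)) = Real.exp (-(((j:ℝ) + 1) * b₁ * x ^ a)) := by
      rw [hsdef]; ring_nf
    rw [f2, f5, f1, hKdef]
    rw [← f4, ← f3]
    have ha' : a ≠ 0 := ne_of_gt ha
    field_simp
  rw [tsum_congr hswap, tsum_mul_left]

end BGWaux

open BGWaux

/-- The regression function of the BGW distribution:
`E[Y|X=x] = (ab₁Γ(1+1/a)x^{a-1}/(b₂^{1/a} f_X(x))) ∑_{j≥1} binom(θ,j)(-1)^{j+1} j^{1-1/a} e^{-jb₁x^a}`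
(sum re-indexed with `j := j+1`); when `a = 1` it reduces to
`E[Y|X=x] = (b₁/(b₂ f_X(x)))·[1-(1-e^{-b₁x})^θ]`. -/
theorem bgw_regression (a b₁ b₂ θ : ℝ) (ha : 0 < a) (hb₁ : 0 < b₁) (hb₂ : 0 < b₂)
    (hθ0 : 0 < θ) (hθ1 : θ ≤ 1) (x : ℝ) (hx : 0 < x) :
    (∫ y in Set.Ioi (0:ℝ), y * bgwPDF a b₁ b₂ θ x y) / bgwMarginalDensity a b₁ θ x
        = a * b₁ * Real.Gamma (1 + 1 / a) * x ^ (a - 1)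
            / (b₂ ^ ((1:ℝ) / a) * bgwMarginalDensity a b₁ θ x)
            * ∑' j : ℕ, ((-1:ℝ) ^ j * (∏ i ∈ Finset.range (j + 1), (θ - i))
                / (Nat.factorial (j + 1))) * ((j : ℝ) + 1) ^ (1 - 1 / a)
                * exp (-(((j : ℝ) + 1) * b₁ * x ^ a))
      ∧ (a = 1 →
          (∫ y in Set.Ioi (0:ℝ), y * bgwPDF a b₁ b₂ θ x y) / bgwMarginalDensity a b₁ θ x
            = b₁ / (b₂ * bgwMarginalDensity a b₁ θ x)
                * (1 - (1 - exp (-(b₁ * x))) ^ θ)) := by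
  have hxa : (0:ℝ) < x ^ a := Real.rpow_pos_of_pos hx a
  have hD : 0 < bgwMarginalDensity a b₁ θ x := by
    unfold bgwMarginalDensity
    have h2 : (0:ℝ) < 1 - Real.exp (-(b₁ * x ^ a)) := by
      have h1 : Real.exp (-(b₁ * x ^ a)) < 1 := by
        rw [Real.exp_lt_one_iff]
        have : (0:ℝ) < b₁ * x ^ a := by positivity
        linarith
      linarith
    have h3 : (0:ℝ) < x ^ (a - 1) := Real.rpow_pos_of_pos hx _
    have h4 : (0:ℝ) < (1 - Real.exp (-(b₁ * x ^ a))) ^ (θ - 1) :=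
      Real.rpow_pos_of_pos h2 _
    have h5 : (0:ℝ) < Real.exp (-(b₁ * x ^ a)) := Real.exp_pos _
    positivity
  have hbne : (0:ℝ) < b₂ ^ ((1:ℝ) / a) := Real.rpow_pos_of_pos hb₂ _
  have hsum_eq : (∑' j : ℕ, ((-1:ℝ) ^ j * (∏ i ∈ Finset.range (j + 1), (θ - i))
        / (Nat.factorial (j + 1))) * ((j : ℝ) + 1) ^ (1 - 1 / a)
        * exp (-(((j : ℝ) + 1) * b₁ * x ^ a)))
      = ∑' j : ℕ, ((-1:ℝ) ^ j * bc θ (j + 1)) * ((j:ℝ) + 1) ^ ((1:ℝ) - 1 / a)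
        * Real.exp (-(((j:ℝ) + 1) * b₁ * x ^ a)) := by
    refine tsum_congr fun j => ?_
    rw [bc, mul_div_assoc]
  have hnum := bgw_numerator a b₁ b₂ θ ha hb₁ hb₂ hθ0 hθ1 x hx
  have key : (∫ y in Set.Ioi (0:ℝ), y * bgwPDF a b₁ b₂ θ x y) / bgwMarginalDensity a b₁ θ x
      = a * b₁ * Real.Gamma (1 + 1 / a) * x ^ (a - 1)
          / (b₂ ^ ((1:ℝ) / a) * bgwMarginalDensity a b₁ θ x)
          * ∑' j : ℕ, ((-1:ℝ) ^ j * (∏ i ∈ Finset.range (j + 1), (θ - i))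
              / (Nat.factorial (j + 1))) * ((j : ℝ) + 1) ^ (1 - 1 / a)
              * exp (-(((j : ℝ) + 1) * b₁ * x ^ a)) := by
    rw [hsum_eq, hnum]
    rw [show -(1 / a) = -((1:ℝ)/a) from rfl, Real.rpow_neg hb₂.le]
    field_simp
    exact tsum_congr fun j => by ring_nf
  refine ⟨key, fun ha1 => ?_⟩
  subst ha1
  rw [key]
  have h11 : (1:ℝ) / 1 = 1 := by norm_num
  rw [h11]
  have hG : Real.Gamma (1 + 1) = 1 := by
    rw [show (1:ℝ) + 1 = 2 by norm_num, Real.Gamma_two]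
  rw [hG]
  simp only [Real.rpow_one, sub_self, Real.rpow_zero]
  -- evaluate the remaining series
  set v : ℝ := Real.exp (-(b₁ * x)) with hvdef
  have hv0 : 0 < v := Real.exp_pos _
  have hv1 : v < 1 := by
    rw [hvdef, Real.exp_lt_one_iff]
    have : (0:ℝ) < b₁ * x := by positivity
    linarith
  have Hb := hasSum_binomial θ (u := -v) (by rwa [abs_neg, abs_of_pos hv0])
  rw [show (1:ℝ) + -v = 1 - v by ring] at Hb
  have S2 : HasSum (fun n : ℕ => bc θ (n + 1) * (-v) ^ (n + 1)) ((1 - v) ^ θ - 1) := by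
    refine (hasSum_nat_add_iff (f := fun k : ℕ => bc θ k * (-v) ^ k) 1).mpr ?_
    have : (1 - v) ^ θ - 1 + ∑ i ∈ Finset.range 1, bc θ i * (-v) ^ i = (1 - v) ^ θ := by
      simp [bc_zero]
    rw [this]
    exact Hb
  have S3 := S2.neg
  have hterm : (fun j : ℕ => ((-1:ℝ) ^ j * bc θ (j + 1)) * 1
      * Real.exp (-(((j:ℝ) + 1) * b₁ * x)))
      = fun n : ℕ => -(bc θ (n + 1) * (-v) ^ (n + 1)) := by
    funext j
    have hexp : Real.exp (-(((j:ℝ) + 1) * b₁ * x)) = v ^ (j + 1) := by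
      rw [hvdef, ← Real.exp_nat_mul]
      congr 1
      push_cast
      ring
    have hneg : (-v) ^ (j + 1) = (-1:ℝ) ^ (j + 1) * v ^ (j + 1) := by
      rw [neg_eq_neg_one_mul, mul_pow]
    rw [hexp, hneg]
    ring
  rw [← hterm] at S3
  have hsum_eq2 : (∑' j : ℕ, ((-1:ℝ) ^ j * (∏ i ∈ Finset.range (j + 1), (θ - i))
        / (Nat.factorial (j + 1))) * 1 * Real.exp (-(((j:ℝ) + 1) * b₁ * x)))
      = ∑' j : ℕ, ((-1:ℝ) ^ j * bc θ (j + 1)) * 1 * Real.exp (-(((j:ℝ) + 1) * b₁ * x)) := by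
    refine tsum_congr fun j => ?_
    rw [bc, mul_div_assoc]
  rw [hsum_eq2, S3.tsum_eq]
  ring
end
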